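/- arXiv:1202.2300 — 9 statements merged into one kernel-verified Lean document; each statement's English description precedes it below -/
import Mathlib

section
/- The odd-girth of a graph is determined by its adjacency spectrum: the odd-girth equals the smallest odd i such that tr A^i ≠ 0 (and tr A^i is a function of the eigenvalues, namely the sum of the i-th powers of the eigenvalues). -/
open SimpleGraph Matrix Finset

private lemma aux_path_edge {V : Type*} [DecidableEq V] {G : SimpleGraph V} :
    ∀ {v u : V} (p : G.Walk v u), p.IsPath → s(u, v) ∈ p.edges → p.length = 1 := by
  intro v u p
  induction p with
  | nil => simp
  | @cons a b c h q ih =>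
    intro hp he
    rw [Walk.edges_cons, List.mem_cons] at he
    rw [Walk.cons_isPath_iff] at hp
    rcases he with he | he
    · rw [Sym2.eq_iff] at he
      rcases he with ⟨rfl, rfl⟩ | ⟨rfl, -⟩
      · exact absurd rfl h.ne
      · have : q = Walk.nil := (Walk.isPath_iff_eq_nil (p := q)).mp hp.1
        subst this; simp
    · exact absurd (Walk.snd_mem_support_of_mem_edges q he) hp.2

private lemma aux_odd_cycle {V : Type*} [DecidableEq V] {G : SimpleGraph V} :
    ∀ (n : ℕ) {u : V} (w : G.Walk u u), w.length = n → Odd n →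
      ∃ (v : V) (c : G.Walk v v), c.IsCycle ∧ Odd c.length ∧ c.length ≤ n := by
  intro n
  induction n using Nat.strong_induction_on with
  | _ n ih =>
  intro u w hlen hodd
  by_cases hnd : w.support.tail.Nodup
  · cases w with
    | nil =>
      simp only [Walk.length_nil] at hlen
      subst hlen; simp at hodd
    | @cons _ b _ h p =>
      have hp : p.IsPath := Walk.IsPath.mk' (by simpa using hnd)
      by_cases he : s(u, b) ∈ p.edges
      · have h1 : p.length = 1 := aux_path_edge p hp he
        rw [Walk.length_cons, h1] at hlen
        subst hlen
        simp [Nat.odd_iff] at hodd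
      · refine ⟨u, Walk.cons h p, (Walk.cons_isCycle_iff p h).mpr ⟨hp, he⟩, ?_, le_of_eq hlen⟩
        rw [hlen]; exact hodd
  · rw [List.nodup_iff_count_le_one] at hnd
    push_neg at hnd
    obtain ⟨x, hx2⟩ := hnd
    have hxmem : x ∈ w.support :=
      List.mem_of_mem_tail (List.count_pos_iff.mp (by omega))
    set w' := w.rotate x hxmem with hw'def
    have hcnt : List.count x w'.support.tail = List.count x w.support.tail :=
      (Walk.support_rotate w x hxmem).perm.count_eq x
    have hw'len : w'.length = n := by
      have h1 := congr_arg Walk.length (w.take_spec hxmem)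
      rw [Walk.length_append] at h1
      have h2 : w'.length = (w.dropUntil x hxmem).length + (w.takeUntil x hxmem).length := by
        rw [hw'def, Walk.rotate, Walk.length_append]
      omega
    clear_value w'
    cases w' with
    | nil => simp at hcnt; omega
    | @cons _ y _ h' q =>
      simp only [Walk.support_cons, List.tail_cons] at hcnt
      have hxq : x ∈ q.support := List.count_pos_iff.mp (by omega)
      set t := q.takeUntil x hxq with htdef
      set d := q.dropUntil x hxq with hddef
      have hsplit : t.append d = q := q.take_spec hxq
      have hct : List.count x t.support = 1 := q.count_support_takeUntil_eq_one hxq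
      have hqsupp : q.support = t.support ++ d.support.tail := by
        conv_lhs => rw [← hsplit]
        exact Walk.support_append t d
      have hcd : 1 ≤ List.count x d.support.tail := by
        rw [hqsupp, List.count_append] at hcnt
        omega
      have hd1 : 1 ≤ d.length := by
        have hmem : x ∈ d.support.tail := List.count_pos_iff.mp (by omega)
        have h4 := List.length_pos_of_mem hmem
        have h5 : d.support.length = d.length + 1 := Walk.length_support d
        have h6 : d.support.tail.length = d.support.length - 1 := List.length_tail
        omega
      have hlensum : (t.length + 1) + d.length = n := by
        have := congr_arg Walk.length hsplit
        rw [Walk.length_append] at this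
        have : q.length + 1 = n := by rw [← hw'len, Walk.length_cons]
        have h3 := congr_arg Walk.length hsplit
        rw [Walk.length_append] at h3
        omega
      rcases Nat.even_or_odd (t.length + 1) with hev | hod
      · have hdo : Odd d.length := by
          obtain ⟨k, hk⟩ := hodd
          obtain ⟨m, hm⟩ := hev
          exact ⟨k - m, by omega⟩
        obtain ⟨v, c, hc, hco, hcl⟩ := ih d.length (by omega) d rfl hdo
        exact ⟨v, c, hc, hco, by omega⟩
      · obtain ⟨v, c, hc, hco, hcl⟩ := ih (t.length + 1) (by omega) (Walk.cons h' t)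
          (by simp [Walk.length_cons]) hod
        exact ⟨v, c, hc, hco, by omega⟩

private lemma aux_trace_ne {V : Type*} [Fintype V] [DecidableEq V] (G : SimpleGraph V)
    [DecidableRel G.Adj] (i : ℕ) :
    Matrix.trace ((G.adjMatrix ℝ) ^ i) ≠ 0 ↔ ∃ (u : V) (w : G.Walk u u), w.length = i := by
  have htr : Matrix.trace ((G.adjMatrix ℝ) ^ i)
      = ∑ u : V, (Fintype.card {p : G.Walk u u | p.length = i} : ℝ) := by
    rw [Matrix.trace]
    exact Finset.sum_congr rfl fun u _ => G.adjMatrix_pow_apply_eq_card_walk i u u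
  rw [htr, ← Nat.cast_sum, Nat.cast_ne_zero]
  constructor
  · intro h
    obtain ⟨u, -, hu⟩ := Finset.exists_ne_zero_of_sum_ne_zero h
    have : Nonempty {p : G.Walk u u | p.length = i} := by
      rw [← Fintype.card_pos_iff]; omega
    obtain ⟨w, hw⟩ := this
    exact ⟨u, w, hw⟩
  · rintro ⟨u, w, hw⟩
    intro h0
    have := Finset.sum_eq_zero_iff.mp h0 u (Finset.mem_univ u)
    rw [Fintype.card_eq_zero_iff] at this
    exact this.elim ⟨w, hw⟩

private lemma aux_trace_pow {V : Type*} [Fintype V] [DecidableEq V] (A : Matrix V V ℝ)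
    (hA : A.IsHermitian) (i : ℕ) :
    Matrix.trace (A ^ i) = ∑ x : V, (hA.eigenvalues x) ^ i := by
  set U : Matrix V V ℝ := (hA.eigenvectorUnitary : Matrix V V ℝ) with hUdef
  set D : Matrix V V ℝ := Matrix.diagonal (RCLike.ofReal ∘ hA.eigenvalues) with hDdef
  have hU : star U * U = 1 := (Matrix.mem_unitaryGroup_iff').mp hA.eigenvectorUnitary.2
  have hU' : U * star U = 1 := (Matrix.mem_unitaryGroup_iff).mp hA.eigenvectorUnitary.2
  have hspec : A = U * D * star U := hA.spectral_theorem
  have hpow : A ^ i = U * D ^ i * star U := by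
    induction i with
    | zero => simp [pow_zero, hU']
    | succ n ih =>
      calc A ^ (n+1) = A ^ n * A := pow_succ A n
      _ = U * D ^ n * star U * (U * D * star U) := by rw [ih, ← hspec]
      _ = U * D ^ n * (star U * U) * D * star U := by
          simp only [Matrix.mul_assoc]
      _ = U * D ^ (n+1) * star U := by
          rw [hU]; simp only [Matrix.mul_one, pow_succ, Matrix.mul_assoc]
  rw [hpow, Matrix.trace_mul_cycle, hU, Matrix.one_mul,
    hDdef, Matrix.diagonal_pow, Matrix.trace_diagonal]
  simp

/-- The odd-girth of a graph (the length of a shortest odd cycle) is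
determined by the adjacency spectrum: it equals the smallest odd `i` with
`tr A^i ≠ 0`; moreover `tr A^i` is the sum of the `i`-th powers of the eigenvalues. -/
theorem stmt_3 {V : Type*} [Fintype V] [DecidableEq V] (G : SimpleGraph V)
    [DecidableRel G.Adj]
    (hA : (G.adjMatrix ℝ).IsHermitian)
    (hoddcycle : ∃ (u : V) (w : G.Walk u u), w.IsCycle ∧ Odd w.length) :
    sInf {n : ℕ | Odd n ∧ ∃ (u : V) (w : G.Walk u u), w.IsCycle ∧ w.length = n}
      = sInf {i : ℕ | Odd i ∧ Matrix.trace ((G.adjMatrix ℝ) ^ i) ≠ 0} ∧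
    ∀ i : ℕ, Matrix.trace ((G.adjMatrix ℝ) ^ i) = ∑ x : V, (hA.eigenvalues x) ^ i := by
  constructor
  · set S : Set ℕ := {n : ℕ | Odd n ∧ ∃ (u : V) (w : G.Walk u u), w.IsCycle ∧ w.length = n}
      with hSdef
    set T : Set ℕ := {i : ℕ | Odd i ∧ Matrix.trace ((G.adjMatrix ℝ) ^ i) ≠ 0} with hTdef
    obtain ⟨u0, w0, hc0, ho0⟩ := hoddcycle
    have hSne : S.Nonempty := ⟨w0.length, ho0, u0, w0, hc0, rfl⟩
    have hgS : sInf S ∈ S := Nat.sInf_mem hSne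
    obtain ⟨hgodd, uc, c, hcyc, hclen⟩ := hgS
    have hgT : sInf S ∈ T := by
      refine ⟨hgodd, ?_⟩
      rw [aux_trace_ne]
      exact ⟨uc, c, hclen⟩
    have hTle : sInf T ≤ sInf S := Nat.sInf_le hgT
    have hTne : T.Nonempty := ⟨sInf S, hgT⟩
    have hTmem : sInf T ∈ T := Nat.sInf_mem hTne
    obtain ⟨hiodd, htri⟩ := hTmem
    rw [aux_trace_ne] at htri
    obtain ⟨u, w, hw⟩ := htri
    obtain ⟨v, cc, hcc, hcco, hccl⟩ := aux_odd_cycle (sInf T) w hw hiodd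
    have : sInf S ≤ cc.length := Nat.sInf_le ⟨hcco, v, cc, hcc, rfl⟩
    omega
  · exact fun i => aux_trace_pow (G.adjMatrix ℝ) hA i
end

section
/- Let Γ be a connected k-regular graph with d+1 distinct eigenvalues and odd-girth at least 2d+1. If u and v are vertices at distance d, then (A^d)_{uv} = π_0/n, where π_0 = ∏_{i=1}^d (k − λ_i) and n is the number of vertices. -/
open SimpleGraph Matrix Finset Polynomial

/-- An eigenvector of the adjacency matrix of a connected `k`-regular graph with eigenvalue `k`
is constant. -/
lemma eig_const_aux {V : Type*} [Fintype V] [DecidableEq V] (G : SimpleGraph V)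
    [DecidableRel G.Adj] {k : ℕ} (hconn : G.Connected) (hreg : G.IsRegularOfDegree k)
    (x : V → ℝ) (hx : G.adjMatrix ℝ *ᵥ x = (k : ℝ) • x) (a b : V) : x a = x b := by
  have hne : Nonempty V := hconn.nonempty
  obtain ⟨a₀, -, hmax⟩ := Finset.exists_max_image Finset.univ x ⟨a, Finset.mem_univ a⟩
  have hsum : ∀ c : V, ∑ w ∈ G.neighborFinset c, x w = (k : ℝ) * x c := by
    intro c
    have := congrFun hx c
    simpa using this
  have step : ∀ c e : V, G.Adj c e → x c = x a₀ → x e = x a₀ := by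
    intro c e hadj hc
    by_contra hne'
    have hlt : x e < x a₀ := lt_of_le_of_ne (hmax e (Finset.mem_univ e)) hne'
    have hstrict : ∑ w ∈ G.neighborFinset c, x w < ∑ _w ∈ G.neighborFinset c, x a₀ := by
      refine Finset.sum_lt_sum (fun w _ => hmax w (Finset.mem_univ w)) ?_
      exact ⟨e, (G.mem_neighborFinset c e).mpr hadj, hlt⟩
    rw [hsum c, hc, Finset.sum_const, G.card_neighborFinset_eq_degree, hreg c] at hstrict
    simp [nsmul_eq_mul] at hstrict
  have walkstep : ∀ (c e : V) (_ : G.Walk c e), x c = x a₀ → x e = x a₀ := by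
    intro c e w
    induction w with
    | nil => exact fun h => h
    | cons hadj p ih => intro h; exact ih (step _ _ hadj h)
  have hall : ∀ c : V, x c = x a₀ := by
    intro c
    obtain ⟨w⟩ := hconn a₀ c
    exact walkstep _ _ w rfl
  rw [hall a, hall b]


lemma aeval_mulVec_eig {V : Type*} [Fintype V] [DecidableEq V] (A : Matrix V V ℝ)
    (x : V → ℝ) (c : ℝ) (hx : A *ᵥ x = c • x) (r : ℝ[X]) :
    (Polynomial.aeval A r) *ᵥ x = r.eval c • x := by
  have hpow : ∀ n : ℕ, (A ^ n) *ᵥ x = c ^ n • x := by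
    intro n
    induction n with
    | zero => simp
    | succ n ih =>
      rw [pow_succ, ← Matrix.mulVec_mulVec, hx, Matrix.mulVec_smul, ih, pow_succ,
        smul_smul, mul_comm]
  induction r using Polynomial.induction_on with
  | C a => simp [Algebra.algebraMap_eq_smul_one, Matrix.smul_mulVec]
  | add p q hp hq => simp [Matrix.add_mulVec, hp, hq, add_smul]
  | monomial n a _ =>
    rw [_root_.map_mul, Polynomial.aeval_C, map_pow, Polynomial.aeval_X,
      Algebra.algebraMap_eq_smul_one, smul_mul_assoc, one_mul, Matrix.smul_mulVec,
      hpow, smul_smul]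
    simp

/-- In a connected `k`-regular graph with `d+1` distinct eigenvalues
`k = λ₀ > ⋯ > λ_d` and odd-girth at least `2d+1`, if `u` and `v` are at distance `d`
then `(A^d)_{uv} = π₀ / n` where `π₀ = ∏_{i=1}^d (k - λᵢ)`. -/
theorem stmt_5 {V : Type*} [Fintype V] [DecidableEq V] (G : SimpleGraph V)
    [DecidableRel G.Adj] (k d : ℕ) (lam : Fin (d + 1) → ℝ)
    (hconn : G.Connected) (hreg : G.IsRegularOfDegree k)
    (hanti : StrictAnti lam) (h0 : lam 0 = (k : ℝ))
    (hspec : spectrum ℝ (G.adjMatrix ℝ) = Set.range lam)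
    (hog : ∀ (u : V) (w : G.Walk u u), w.IsCycle → Odd w.length → 2 * d + 1 ≤ w.length)
    (u v : V) (huv : G.dist u v = d) :
    ((G.adjMatrix ℝ) ^ d) u v
      = (∏ i ∈ Finset.Ioi (0 : Fin (d + 1)), ((k : ℝ) - lam i)) / (Fintype.card V : ℝ) := by
  classical
  set A := G.adjMatrix ℝ with hAdef
  have hA : IsSelfAdjoint A := by
    show star A = A
    ext i j
    simp only [Matrix.star_apply, star_trivial, hAdef]
    rw [← Matrix.transpose_apply (G.adjMatrix ℝ) i j, SimpleGraph.transpose_adjMatrix]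
  set q : ℝ[X] := ∏ i ∈ Finset.Ioi (0 : Fin (d + 1)), (X - C (lam i)) with hq
  set p : ℝ[X] := ∏ i : Fin (d + 1), (X - C (lam i)) with hp
  have hIoi : Finset.Ioi (0 : Fin (d + 1)) = Finset.univ.erase 0 := by
    ext i
    simp [Finset.mem_Ioi, Finset.mem_erase, Fin.pos_iff_ne_zero]
  have hpq : p = (X - C ((k : ℝ))) * q := by
    rw [hp, hq, hIoi, ← h0]
    exact (Finset.mul_prod_erase _ _ (Finset.mem_univ 0)).symm
  -- annihilation
  have hp0 : Polynomial.aeval A p = 0 := by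
    rw [← cfc_polynomial p A hA]
    have h1 : (spectrum ℝ A).EqOn p.eval 0 := by
      intro xx hxx
      rw [hspec] at hxx
      obtain ⟨i, rfl⟩ := hxx
      simp only [hp, Polynomial.eval_prod, Polynomial.eval_sub, Polynomial.eval_X,
        Polynomial.eval_C, Pi.zero_apply]
      exact Finset.prod_eq_zero (Finset.mem_univ i) (by ring)
    rw [cfc_congr h1]
    exact cfc_zero ℝ A
  set M := Polynomial.aeval A q with hM
  have hAM : A * M = (k : ℝ) • M := by
    have h2 : Polynomial.aeval A ((X - C ((k : ℝ))) * q) = 0 := by rw [← hpq]; exact hp0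
    rw [_root_.map_mul, map_sub, Polynomial.aeval_X, Polynomial.aeval_C, sub_mul,
      sub_eq_zero, ← Algebra.smul_def] at h2
    exact h2.symm ▸ rfl
  have hMA : M * A = (k : ℝ) • M := by
    have h2 : Polynomial.aeval A (q * (X - C ((k : ℝ)))) = 0 := by
      rw [mul_comm, ← hpq]; exact hp0
    rw [_root_.map_mul, map_sub, Polynomial.aeval_X, Polynomial.aeval_C, mul_sub,
      sub_eq_zero, ← Algebra.commutes, ← Algebra.smul_def] at h2
    exact h2.symm ▸ rfl
  have hsymA : ∀ a b : V, A a b = A b a := by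
    intro a b
    rw [hAdef, ← Matrix.transpose_apply (G.adjMatrix ℝ) b a, SimpleGraph.transpose_adjMatrix]
  have hcol : ∀ i i' j : V, M i j = M i' j := by
    intro i i' j
    refine eig_const_aux G hconn hreg (fun l => M l j) ?_ i i'
    funext l
    have h3 := congrFun (congrFun hAM l) j
    simp only [Matrix.mul_apply, Matrix.smul_apply, smul_eq_mul] at h3
    simp only [Matrix.mulVec, dotProduct, Pi.smul_apply, smul_eq_mul]
    exact h3
  have hrow : ∀ i j j' : V, M i j = M i j' := by
    intro i j j'
    refine eig_const_aux G hconn hreg (fun l => M i l) ?_ j j'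
    funext l
    have h3 := congrFun (congrFun hMA i) l
    simp only [Matrix.mul_apply, Matrix.smul_apply, Pi.smul_apply, smul_eq_mul] at h3
    simp only [Matrix.mulVec, dotProduct, Pi.smul_apply, smul_eq_mul, ← hAdef]
    rw [← h3]
    exact Finset.sum_congr rfl fun m _ => by rw [hsymA l m, mul_comm]
  -- row sums
  have hones : A *ᵥ (fun _ => (1 : ℝ)) = (k : ℝ) • (fun _ => (1 : ℝ)) := by
    funext l
    simp only [hAdef, SimpleGraph.adjMatrix_mulVec_apply, Pi.smul_apply, smul_eq_mul, mul_one]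
    rw [Finset.sum_const, G.card_neighborFinset_eq_degree, hreg l]
    simp
  have hMones := aeval_mulVec_eig A (fun _ => (1 : ℝ)) ((k : ℝ)) hones q
  have hsum : ∑ j, M u j = Polynomial.eval ((k : ℝ)) q := by
    have h4 := congrFun hMones u
    simpa [Matrix.mulVec, dotProduct] using h4
  have hqk : Polynomial.eval ((k : ℝ)) q = ∏ i ∈ Finset.Ioi (0 : Fin (d + 1)), ((k : ℝ) - lam i) := by
    simp [hq, Polynomial.eval_prod]
  have hne : Nonempty V := hconn.nonempty
  have hcard : (Fintype.card V : ℝ) ≠ 0 := by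
    exact_mod_cast Fintype.card_ne_zero
  have hMuv : M u v = (∏ i ∈ Finset.Ioi (0 : Fin (d + 1)), ((k : ℝ) - lam i)) / (Fintype.card V : ℝ) := by
    have h5 : ∑ j, M u j = (Fintype.card V : ℝ) * M u v := by
      rw [Finset.sum_congr rfl fun j _ => hrow u j v]
      simp [mul_comm, Finset.sum_const, nsmul_eq_mul]
    rw [h5, hqk] at hsum
    field_simp [hcard] at hsum ⊢
    linarith [hsum]
  -- M u v = (A^d) u v
  have hqmonic : q.Monic := Polynomial.monic_prod_of_monic _ _ fun i _ => Polynomial.monic_X_sub_C _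
  have hqdeg : q.natDegree = d := by
    rw [hq, Polynomial.natDegree_prod _ _ (fun i _ => Polynomial.X_sub_C_ne_zero _)]
    simp only [Polynomial.natDegree_X_sub_C]
    rw [Finset.sum_const, smul_eq_mul, mul_one, Fin.card_Ioi]
    simp
  have hApow0 : ∀ i : ℕ, i < d → (A ^ i) u v = 0 := by
    intro i hi
    have hempty : IsEmpty {p : G.Walk u v | p.length = i} := by
      refine ⟨fun w => ?_⟩
      have hlen : w.1.length = i := w.2
      have hd := SimpleGraph.dist_le w.1
      omega
    have hcard0 : Fintype.card {p : G.Walk u v | p.length = i} = 0 :=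
      Fintype.card_eq_zero_iff.mpr hempty
    rw [hAdef, SimpleGraph.adjMatrix_pow_apply_eq_card_walk, hcard0, Nat.cast_zero]
  have hfinal : M u v = (A ^ d) u v := by
    rw [hM, Polynomial.aeval_eq_sum_range, hqdeg]
    have h6 : (∑ i ∈ Finset.range (d + 1), q.coeff i • A ^ i) u v
        = ∑ i ∈ Finset.range (d + 1), q.coeff i * (A ^ i) u v := by
      simp [Matrix.sum_apply, Matrix.smul_apply, smul_eq_mul]
    rw [h6, Finset.sum_range_succ]
    have hcoeffd : q.coeff d = 1 := by rw [← hqdeg]; exact hqmonic.coeff_natDegree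
    rw [hcoeffd, one_mul]
    have h7 : ∑ i ∈ Finset.range d, q.coeff i * (A ^ i) u v = 0 :=
      Finset.sum_eq_zero fun i hi => by rw [hApow0 i (Finset.mem_range.mp hi), mul_zero]
    rw [h7, zero_add]
  rw [← hfinal]
  exact hMuv
end

section
/- Let Γ be a connected k-regular graph on n vertices with d+1 distinct eigenvalues and odd-girth at least 2d+1. Then for every vertex u, (A^{2d+1})_{uu} = k_d(u) · ã_d · π_0² / n², where k_d(u) is the number of vertices at distance d from u, ã_d = Σ_{i=0}^d λ_i, and π_0 = ∏_{i=1}^d (k − λ_i). -/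
open SimpleGraph Matrix Finset Polynomial

section Aux

variable {V : Type*}

/-- A path whose endpoints are joined by an edge of the path has length 1. -/
lemma aux_path_length_one {G : SimpleGraph V} {v u : V} (q : G.Walk v u)
    (hp : q.IsPath) (he : s(u, v) ∈ q.edges) : q.length = 1 := by
  cases q with
  | nil => simp at he
  | cons h' q' =>
    rename_i y
    rw [SimpleGraph.Walk.edges_cons, List.mem_cons] at he
    rcases he with he | he
    · have huy : u = y := by
        rw [Sym2.eq_iff] at he
        rcases he with ⟨h1, h2⟩ | ⟨h1, _⟩
        · exact h1.trans h2
        · exact h1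
      subst huy
      have hq' : q' = SimpleGraph.Walk.nil :=
        SimpleGraph.Walk.isPath_iff_eq_nil.1 hp.of_cons
      subst hq'
      simp
    · exact absurd (q'.snd_mem_support_of_mem_edges he)
        ((SimpleGraph.Walk.cons_isPath_iff _ _).1 hp).2

/-- A closed walk of odd length contains an odd cycle of length at most that of the walk. -/
lemma aux_exists_odd_cycle [DecidableEq V] {G : SimpleGraph V} :
    ∀ (n : ℕ) (u : V) (w : G.Walk u u), w.length ≤ n → Odd w.length →
      ∃ (x : V) (c : G.Walk x x), c.IsCycle ∧ Odd c.length ∧ c.length ≤ w.length := by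
  intro n
  induction n with
  | zero =>
    intro u w hle hodd
    rw [Nat.le_zero] at hle
    rw [hle, Nat.odd_iff] at hodd
    omega
  | succ n ih =>
    intro u w hle hodd
    cases w with
    | nil => rw [SimpleGraph.Walk.length_nil, Nat.odd_iff] at hodd; omega
    | cons h q =>
      rename_i y
      rw [SimpleGraph.Walk.length_cons] at hodd hle ⊢
      by_cases hnd : q.support.Nodup
      · refine ⟨u, SimpleGraph.Walk.cons h q, ?_, by
          rwa [SimpleGraph.Walk.length_cons], le_rfl⟩
        rw [SimpleGraph.Walk.cons_isCycle_iff]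
        refine ⟨(SimpleGraph.Walk.isPath_def q).2 hnd, fun he => ?_⟩
        have hq1 : q.length = 1 :=
          aux_path_length_one q ((SimpleGraph.Walk.isPath_def q).2 hnd) he
        rw [hq1, Nat.odd_iff] at hodd
        omega
      · obtain ⟨a, ha⟩ : ∃ a, 2 ≤ q.support.count a := by
          by_contra hc
          push_neg at hc
          exact hnd (List.nodup_iff_count_le_one.2 fun a => by have := hc a; omega)
        have hy1 : a ∈ q.support := by
          by_contra hmem
          rw [← List.count_eq_zero] at hmem
          omega
        have hcount_t : (q.takeUntil a hy1).support.count a = 1 :=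
          q.count_support_takeUntil_eq_one hy1
        have hq_support : q.support
            = (q.takeUntil a hy1).support ++ (q.dropUntil a hy1).support.tail := by
          conv_lhs => rw [← q.take_spec hy1]
          rw [SimpleGraph.Walk.support_append]
        have hy2 : a ∈ (q.dropUntil a hy1).support.tail := by
          by_contra hmem
          rw [← List.count_eq_zero] at hmem
          rw [hq_support, List.count_append] at ha
          omega
        have hlen_q : (q.takeUntil a hy1).length + (q.dropUntil a hy1).length = q.length := by
          conv_rhs => rw [← q.take_spec hy1]
          rw [SimpleGraph.Walk.length_append]
        have hdrlenpos : 0 < (q.dropUntil a hy1).length := by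
          by_contra hz
          push_neg at hz
          have h0 : (q.dropUntil a hy1).length = 0 := by omega
          have hsup := (q.dropUntil a hy1).length_support
          rw [h0] at hsup
          have htl : (q.dropUntil a hy1).support.tail.length = 0 := by
            have : (q.dropUntil a hy1).support.tail.length
                = (q.dropUntil a hy1).support.length - 1 := List.length_tail
            omega
          rw [List.length_eq_zero_iff] at htl
          rw [htl] at hy2
          simp at hy2
        obtain ⟨z, hadj, dr', hdr⟩ :=
          SimpleGraph.Walk.not_nil_iff.1
            (SimpleGraph.Walk.not_nil_iff_lt_length.2 hdrlenpos)
        have hy3 : a ∈ dr'.support := by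
          rw [hdr] at hy2
          simpa using hy2
        have hlen_dr' : (dr'.takeUntil a hy3).length + (dr'.dropUntil a hy3).length
            = dr'.length := by
          conv_rhs => rw [← dr'.take_spec hy3]
          rw [SimpleGraph.Walk.length_append]
        have hldr : (q.dropUntil a hy1).length = dr'.length + 1 := by
          rw [hdr, SimpleGraph.Walk.length_cons]
        set loop : G.Walk a a := SimpleGraph.Walk.cons hadj (dr'.takeUntil a hy3) with hloop
        set outer : G.Walk u u :=
          SimpleGraph.Walk.cons h ((q.takeUntil a hy1).append (dr'.dropUntil a hy3))
          with houter
        have hll : loop.length = (dr'.takeUntil a hy3).length + 1 := by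
          rw [hloop, SimpleGraph.Walk.length_cons]
        have hol : outer.length
            = (q.takeUntil a hy1).length + (dr'.dropUntil a hy3).length + 1 := by
          rw [houter, SimpleGraph.Walk.length_cons, SimpleGraph.Walk.length_append]
        rcases Nat.even_or_odd loop.length with hpar | hpar
        · have houd : Odd outer.length := by
            rw [Nat.odd_iff] at hodd ⊢
            rw [Nat.even_iff] at hpar
            omega
          obtain ⟨x, c, hc, hco, hcl⟩ := ih u outer (by omega) houd
          exact ⟨x, c, hc, hco, by omega⟩
        · obtain ⟨x, c, hc, hco, hcl⟩ := ih a loop (by omega) hpar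
          exact ⟨x, c, hc, hco, by omega⟩

variable [Fintype V] [DecidableEq V]

lemma aux_entry_zero_of_lt_dist (G : SimpleGraph V) [DecidableRel G.Adj]
    {m : ℕ} {u v : V} (hm : m < G.dist u v) : ((G.adjMatrix ℝ) ^ m) u v = 0 := by
  rw [SimpleGraph.adjMatrix_pow_apply_eq_card_walk]
  have hcard : Fintype.card { p : G.Walk u v | p.length = m } = 0 := by
    rw [Fintype.card_eq_zero_iff]
    constructor
    rintro ⟨p, hp⟩
    rw [Set.mem_setOf_eq] at hp
    have := SimpleGraph.dist_le p
    omega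
  rw [hcard, Nat.cast_zero]

lemma aux_entry_zero_of_odd (G : SimpleGraph V) [DecidableRel G.Adj] (d : ℕ)
    (hconn : G.Connected)
    (hog : ∀ (u : V) (w : G.Walk u u), w.IsCycle → Odd w.length → 2 * d + 1 ≤ w.length)
    {m : ℕ} {u v : V} (hodd : Odd (m + G.dist u v)) (hle : m + G.dist u v ≤ 2 * d) :
    ((G.adjMatrix ℝ) ^ m) u v = 0 := by
  by_contra hne
  rw [SimpleGraph.adjMatrix_pow_apply_eq_card_walk] at hne
  have hpos : Fintype.card { p : G.Walk u v | p.length = m } ≠ 0 := by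
    intro h0
    rw [h0, Nat.cast_zero] at hne
    exact hne rfl
  obtain ⟨⟨p, hp⟩⟩ := Fintype.card_pos_iff.1 (Nat.pos_of_ne_zero hpos)
  rw [Set.mem_setOf_eq] at hp
  obtain ⟨g, hg⟩ := hconn.exists_walk_length_eq_dist u v
  have hcl : (p.append g.reverse).length = m + G.dist u v := by
    rw [SimpleGraph.Walk.length_append, SimpleGraph.Walk.length_reverse, hp, hg]
  obtain ⟨x, c, hc, hco, hcle⟩ :=
    aux_exists_odd_cycle (m + G.dist u v) u (p.append g.reverse) (le_of_eq hcl)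
      (by rwa [hcl])
  rw [hcl] at hcle
  have := hog x c hc hco
  omega

/-- A polynomial vanishing on the real spectrum of a real hermitian matrix kills it. -/
lemma aux_aeval_eq_zero {A : Matrix V V ℝ} (hA : A.IsHermitian) (q : ℝ[X])
    (hq : ∀ x ∈ spectrum ℝ A, q.eval x = 0) : Polynomial.aeval A q = 0 := by
  set U : Matrix V V ℝ := (hA.eigenvectorUnitary : Matrix V V ℝ) with hUdef
  have hmem := hA.eigenvectorUnitary.2
  have hUU : U * star U = 1 := (Matrix.mem_unitaryGroup_iff).1 hmem
  have hUU' : star U * U = 1 := (Matrix.mem_unitaryGroup_iff').1 hmem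
  set ev : V → ℝ := hA.eigenvalues with hev
  set D : Matrix V V ℝ := Matrix.diagonal ev with hD
  have hsp : A = U * D * star U := by
    have hst := hA.spectral_theorem
    simpa using hst
  have hpow : ∀ m : ℕ, A ^ m = U * D ^ m * star U := by
    intro m
    induction m with
    | zero => rw [pow_zero, pow_zero, Matrix.mul_one, hUU]
    | succ m ihm =>
      rw [pow_succ, pow_succ, ihm]
      nth_rewrite 1 [hsp]
      have h4 : U * D ^ m * star U * (U * D * star U)
          = U * D ^ m * (star U * U) * (D * star U) := by
        noncomm_ring
      rw [h4, hUU', Matrix.mul_one]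
      noncomm_ring
  have key : ∀ r : ℝ[X], Polynomial.aeval A r
      = U * Matrix.diagonal (fun i => r.eval (ev i)) * star U := by
    intro r
    induction r using Polynomial.induction_on' with
    | add f g hf hg =>
      have hdg : Matrix.diagonal (fun i => (f + g).eval (ev i))
          = Matrix.diagonal (fun i => f.eval (ev i))
            + Matrix.diagonal (fun i => g.eval (ev i)) := by
        rw [Matrix.diagonal_add]
        congr 1
        funext i
        simp
      rw [map_add, hf, hg, hdg, Matrix.mul_add, Matrix.add_mul]
    | monomial n a =>
      have h1 : Polynomial.aeval A (Polynomial.monomial n a) = a • A ^ n := by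
        rw [Polynomial.aeval_monomial, Algebra.algebraMap_eq_smul_one,
          smul_mul_assoc, one_mul]
      have h2 : Matrix.diagonal (fun i => (Polynomial.monomial n a).eval (ev i))
          = a • D ^ n := by
        have h3 : (fun i => Polynomial.eval (ev i) (Polynomial.monomial n a))
            = a • (ev ^ n) := by
          funext i
          simp [Polynomial.eval_monomial]
        rw [h3, Matrix.diagonal_smul, hD, Matrix.diagonal_pow]
      rw [h1, h2, hpow n, mul_smul_comm, smul_mul_assoc]
  rw [key q]
  have hzero : (fun i => q.eval (ev i)) = fun _ => (0 : ℝ) :=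
    funext fun i => hq _ (hA.eigenvalues_mem_spectrum_real i)
  rw [hzero]
  simp

end Aux

/-- In a connected `k`-regular graph on `n` vertices with `d+1` distinct
eigenvalues `k = λ₀ > ⋯ > λ_d` and odd-girth at least `2d+1`, for every vertex `u`
one has `(A^{2d+1})_{uu} = k_d(u) · ã_d · π₀² / n²`, where `k_d(u)` is the number of
vertices at distance `d` from `u`. -/
theorem stmt_7 {V : Type*} [Fintype V] [DecidableEq V] (G : SimpleGraph V)
    [DecidableRel G.Adj] (k d : ℕ) (lam : Fin (d + 1) → ℝ)
    (hconn : G.Connected) (hreg : G.IsRegularOfDegree k)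
    (hanti : StrictAnti lam) (h0 : lam 0 = (k : ℝ))
    (hspec : spectrum ℝ (G.adjMatrix ℝ) = Set.range lam)
    (hog : ∀ (u : V) (w : G.Walk u u), w.IsCycle → Odd w.length → 2 * d + 1 ≤ w.length) :
    ∀ u : V, ((G.adjMatrix ℝ) ^ (2 * d + 1)) u u
      = ((Finset.univ.filter (fun v => G.dist u v = d)).card : ℝ) *
          (∑ i : Fin (d + 1), lam i) *
          (∏ i ∈ Finset.Ioi (0 : Fin (d + 1)), ((k : ℝ) - lam i)) ^ 2
          / (Fintype.card V : ℝ) ^ 2 := by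
  intro u
  set A : Matrix V V ℝ := G.adjMatrix ℝ with hAdef
  have hnonempty : Nonempty V := hconn.nonempty
  have hn0 : (Fintype.card V : ℝ) ≠ 0 := by
    exact_mod_cast Fintype.card_ne_zero
  have hE1 : ∀ (m : ℕ) (x y : V), m < G.dist x y → (A ^ m) x y = 0 := by
    intro m x y hm
    rw [hAdef]
    exact aux_entry_zero_of_lt_dist G hm
  have hE2 : ∀ (m : ℕ) (x y : V), Odd (m + G.dist x y) → m + G.dist x y ≤ 2 * d →
      (A ^ m) x y = 0 := by
    intro m x y h1 h2
    rw [hAdef]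
    exact aux_entry_zero_of_odd G d hconn hog h1 h2
  -- symmetry of powers
  have hAs : Aᵀ = A := G.isSymm_adjMatrix
  have hsymm : ∀ (m : ℕ) (x y : V), (A ^ m) x y = (A ^ m) y x := by
    intro m x y
    have h1 : (A ^ m)ᵀ = A ^ m := by rw [Matrix.transpose_pow, hAs]
    conv_lhs => rw [← h1]
    rfl
  have hherm : A.IsHermitian := by
    show Aᴴ = A
    ext i j
    rw [Matrix.conjTranspose_apply, star_trivial]
    exact (congrFun (congrFun hAs j) i).symm
  -- polynomials
  set sm : ℝ := ∑ i : Fin (d + 1), lam i with hsm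
  set p : ℝ[X] := ∏ i ∈ Finset.Ioi (0 : Fin (d + 1)), (X - C (lam i)) with hpdef
  set qq : ℝ[X] := ∏ i : Fin (d + 1), (X - C (lam i)) with hqqdef
  have hIoi : Finset.Ioi (0 : Fin (d + 1)) = Finset.univ.erase 0 := by
    ext i
    simp [Finset.mem_Ioi, Finset.mem_erase, Fin.pos_iff_ne_zero]
  have hIoicard : (Finset.Ioi (0 : Fin (d + 1))).card = d := by
    rw [hIoi, Finset.card_erase_of_mem (Finset.mem_univ 0), Finset.card_univ,
      Fintype.card_fin]
    omega
  have hqfact : qq = (X - C (lam 0)) * p := by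
    rw [hqqdef, hpdef, hIoi]
    exact (Finset.mul_prod_erase Finset.univ _ (Finset.mem_univ 0)).symm
  have hp_monic : p.Monic := monic_prod_of_monic _ _ fun i _ => monic_X_sub_C _
  have hqq_monic : qq.Monic := monic_prod_of_monic _ _ fun i _ => monic_X_sub_C _
  have hp_deg : p.natDegree = d := by
    rw [hpdef, Polynomial.natDegree_prod _ _ (fun i _ => X_sub_C_ne_zero (lam i))]
    simp [Polynomial.natDegree_X_sub_C, hIoicard]
  have hqq_deg : qq.natDegree = d + 1 := by
    rw [hqqdef, Polynomial.natDegree_prod _ _ (fun i _ => X_sub_C_ne_zero (lam i))]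
    simp [Polynomial.natDegree_X_sub_C]
  -- qq(A) = 0
  have hqA : Polynomial.aeval A qq = 0 := by
    apply aux_aeval_eq_zero hherm
    intro x hx
    rw [hspec] at hx
    obtain ⟨i, rfl⟩ := hx
    rw [hqqdef, Polynomial.eval_prod]
    exact Finset.prod_eq_zero (Finset.mem_univ i) (by simp)
  set B : Matrix V V ℝ := Polynomial.aeval A p with hBdef
  -- A * B = k • B
  have hmul : A * B = (k : ℝ) • B := by
    have h1 : Polynomial.aeval A (X - C (lam 0)) * B = 0 := by
      rw [hBdef, ← _root_.map_mul, ← hqfact, hqA]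
    rw [map_sub, Polynomial.aeval_X, Polynomial.aeval_C,
      Algebra.algebraMap_eq_smul_one, Matrix.sub_mul, smul_mul_assoc, one_mul,
      sub_eq_zero] at h1
    rw [h1, h0]
  -- constant columns via the laplacian kernel
  have hker : ∀ x : V → ℝ, A *ᵥ x = (k : ℝ) • x → ∀ i j, x i = x j := by
    intro x hx i j
    have hlap : Matrix.toLin' (G.lapMatrix ℝ) x = 0 := by
      rw [Matrix.toLin'_apply]
      funext w
      rw [SimpleGraph.lapMatrix_mulVec_apply]
      have h2 : (A *ᵥ x) w = ∑ t ∈ G.neighborFinset w, x t := by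
        rw [hAdef]
        exact SimpleGraph.adjMatrix_mulVec_apply _ _ _
      rw [← h2, hx, hreg w]
      simp [smul_eq_mul]
    exact (SimpleGraph.lapMatrix_mulVec_eq_zero_iff_forall_reachable (G := G) (x := x)).1
      (by rwa [Matrix.toLin'_apply] at hlap) i j (hconn i j)
  have hcol : ∀ x y j, B x j = B y j := by
    intro x y j
    refine hker (fun i => B i j) ?_ x y
    funext w
    have h3 : (A * B) w j = ((k : ℝ) • B) w j := by rw [hmul]
    rw [Matrix.mul_apply] at h3
    simpa [Matrix.mulVec, dotProduct, smul_eq_mul] using h3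
  -- entrywise expansion of aeval
  have hBexp : ∀ (r : ℝ[X]) (x y : V),
      (Polynomial.aeval A r) x y
        = ∑ i ∈ Finset.range (r.natDegree + 1), r.coeff i * ((A ^ i) x y) := by
    intro r x y
    rw [Polynomial.aeval_eq_sum_range, Matrix.sum_apply]
    refine Finset.sum_congr rfl fun i _ => ?_
    rw [Matrix.smul_apply, smul_eq_mul]
  have hBsymm : ∀ x y, B x y = B y x := by
    intro x y
    rw [hBdef, hBexp, hBexp]
    exact Finset.sum_congr rfl fun i _ => by rw [hsymm i x y]
  have hBconst : ∀ x y, B x y = B u u := by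
    intro x y
    calc B x y = B u y := hcol x u y
    _ = B y u := hBsymm u y
    _ = B u u := hcol y u u
  set c : ℝ := B u u with hc
  -- row sums of powers
  have hrowA : ∀ w, ∑ v, A w v = (k : ℝ) := by
    intro w
    have h5 : ∑ v, A w v = ((Finset.univ.filter (G.Adj w)).card : ℝ) := by
      simp only [hAdef, SimpleGraph.adjMatrix_apply]
      rw [Finset.sum_boole]
    have h6 : (G.neighborFinset w).card = k := hreg w
    rw [h5, ← SimpleGraph.neighborFinset_eq_filter, h6]
  have hrow : ∀ (m : ℕ) (w : V), ∑ v, (A ^ m) w v = (k : ℝ) ^ m := by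
    intro m
    induction m with
    | zero => intro w; simp [Matrix.one_apply]
    | succ m ihm =>
      intro w
      rw [pow_succ]
      calc ∑ v, (A ^ m * A) w v = ∑ v, ∑ t, (A ^ m) w t * A t v := by
            refine Finset.sum_congr rfl fun v _ => ?_
            rw [Matrix.mul_apply]
        _ = ∑ t, ∑ v, (A ^ m) w t * A t v := Finset.sum_comm
        _ = ∑ t, (A ^ m) w t * (k : ℝ) := by
            refine Finset.sum_congr rfl fun t _ => ?_
            rw [← Finset.mul_sum, hrowA t]
        _ = (k : ℝ) ^ m * (k : ℝ) := by rw [← Finset.sum_mul, ihm w]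
        _ = (k : ℝ) ^ (m + 1) := by rw [pow_succ]
  -- value of the constant c
  have hrowB : ∑ v, B u v = Polynomial.eval (k : ℝ) p := by
    calc ∑ v, B u v
        = ∑ v, ∑ i ∈ Finset.range (p.natDegree + 1), p.coeff i * ((A ^ i) u v) := by
          refine Finset.sum_congr rfl fun v _ => ?_
          rw [hBdef, hBexp]
      _ = ∑ i ∈ Finset.range (p.natDegree + 1), ∑ v, p.coeff i * ((A ^ i) u v) :=
          Finset.sum_comm
      _ = ∑ i ∈ Finset.range (p.natDegree + 1), p.coeff i * (k : ℝ) ^ i := by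
          refine Finset.sum_congr rfl fun i _ => ?_
          rw [← Finset.mul_sum, hrow i u]
      _ = Polynomial.eval (k : ℝ) p := (Polynomial.eval_eq_sum_range _).symm
  have hnc : (Fintype.card V : ℝ) * c
      = ∏ i ∈ Finset.Ioi (0 : Fin (d + 1)), ((k : ℝ) - lam i) := by
    have h1 : ∑ v, B u v = (Fintype.card V : ℝ) * c := by
      rw [Finset.sum_congr rfl fun v _ => hBconst u v, Finset.sum_const,
        Finset.card_univ, nsmul_eq_mul]
    have h2 : Polynomial.eval (k : ℝ) p
        = ∏ i ∈ Finset.Ioi (0 : Fin (d + 1)), ((k : ℝ) - lam i) := by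
      rw [hpdef, Polynomial.eval_prod]
      exact Finset.prod_congr rfl fun i _ => by simp
    rw [← h1, hrowB, h2]
  -- vanishing of low-degree polynomial entries
  have hZ : ∀ (r : ℝ[X]) (x y : V) (m : ℕ), r.degree < (m : ℕ) → m ≤ G.dist x y →
      (Polynomial.aeval A r) x y = 0 := by
    intro r x y m hdeg hm
    rw [hBexp]
    refine Finset.sum_eq_zero fun i _ => ?_
    by_cases hci : r.coeff i = 0
    · rw [hci, zero_mul]
    · have hi : (i : WithBot ℕ) < (m : ℕ) :=
        lt_of_le_of_lt (Polynomial.le_degree_of_ne_zero hci) hdeg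
      have him : i < m := by exact_mod_cast hi
      rw [hE1 i x y (lt_of_lt_of_le him hm), mul_zero]
  have hrp : (p - X ^ d).degree < ((d : ℕ) : WithBot ℕ) := by
    have hpd : p.degree = (d : ℕ) := by
      rw [Polynomial.degree_eq_natDegree hp_monic.ne_zero, hp_deg]
    have hdx : (X ^ d : ℝ[X]).degree = (d : ℕ) := Polynomial.degree_X_pow d
    have hlx : (X ^ d : ℝ[X]).leadingCoeff = 1 := Polynomial.leadingCoeff_X_pow d
    have h7 := Polynomial.degree_sub_lt (hpd.trans hdx.symm) hp_monic.ne_zero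
      (hp_monic.leadingCoeff.trans hlx.symm)
    rwa [hpd] at h7
  have hAd : ∀ x y, d ≤ G.dist x y → (A ^ d) x y = c := by
    intro x y hxy
    have h1 : (Polynomial.aeval A (p - X ^ d)) x y = 0 := hZ _ x y d hrp hxy
    rw [map_sub, map_pow, Polynomial.aeval_X, Matrix.sub_apply, sub_eq_zero] at h1
    rw [← h1]
    exact hBconst x y
  have hpipos : 0 < ∏ i ∈ Finset.Ioi (0 : Fin (d + 1)), ((k : ℝ) - lam i) := by
    refine Finset.prod_pos fun i hi => ?_
    rw [Finset.mem_Ioi] at hi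
    have h8 := hanti hi
    rw [h0] at h8
    linarith
  have hcne : c ≠ 0 := by
    intro h
    rw [h, mul_zero] at hnc
    exact absurd hnc.symm (ne_of_gt hpipos)
  have hdiam : ∀ x y, G.dist x y ≤ d := by
    intro x y
    by_contra hlt
    push_neg at hlt
    have h1 := hE1 d x y hlt
    have h2 := hAd x y (le_of_lt hlt)
    rw [h1] at h2
    exact hcne h2.symm
  -- coefficient of qq at degree d
  have hnext : qq.coeff d = -sm := by
    have h1 : qq.nextCoeff = -sm := by
      rw [hqqdef, Polynomial.prod_X_sub_C_nextCoeff, hsm]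
    have h2 : qq.nextCoeff = qq.coeff (qq.natDegree - 1) :=
      Polynomial.nextCoeff_of_natDegree_pos (by rw [hqq_deg]; omega)
    rw [h2, hqq_deg, Nat.add_sub_cancel] at h1
    exact h1
  set r2 : ℝ[X] := qq - (X ^ (d + 1) - C sm * X ^ d) with hr2
  have hr2deg : r2.degree < (d : ℕ) := by
    rw [Polynomial.degree_lt_iff_coeff_zero]
    intro m hm
    rw [hr2, Polynomial.coeff_sub, Polynomial.coeff_sub, Polynomial.coeff_C_mul,
      Polynomial.coeff_X_pow, Polynomial.coeff_X_pow]
    rcases eq_or_lt_of_le hm with hmd | hmd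
    · rw [← hmd, if_neg (by omega), if_pos rfl, hnext]
      ring
    · rcases eq_or_lt_of_le (Nat.succ_le_of_lt hmd) with hmd1 | hmd1
      · have hcm : qq.coeff m = 1 := by
          have hmm : m = qq.natDegree := by rw [hqq_deg]; omega
          rw [hmm]
          exact hqq_monic.coeff_natDegree
        rw [hcm, if_pos (by omega : m = d + 1), if_neg (by omega)]
        ring
      · have hcm : qq.coeff m = 0 :=
          Polynomial.coeff_eq_zero_of_natDegree_lt (by omega)
        rw [hcm, if_neg (by omega), if_neg (by omega)]
        ring
  have hqsplit : Polynomial.aeval A qq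
      = Polynomial.aeval A r2 + (A ^ (d + 1) - sm • A ^ d) := by
    have h5 : Polynomial.aeval A (X ^ (d + 1) - C sm * X ^ d : ℝ[X])
        = A ^ (d + 1) - sm • A ^ d := by
      rw [map_sub, _root_.map_mul, Polynomial.aeval_C, map_pow, map_pow,
        Polynomial.aeval_X, Algebra.algebraMap_eq_smul_one, smul_mul_assoc, one_mul]
    rw [hr2, map_sub, h5]
    abel
  have hAd1 : ∀ x y, G.dist x y = d → (A ^ (d + 1)) x y = sm * c := by
    intro x y hxy
    have h1 : (Polynomial.aeval A qq) x y = 0 := by rw [hqA]; simp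
    rw [hqsplit, Matrix.add_apply, Matrix.sub_apply, Matrix.smul_apply, smul_eq_mul,
      hZ r2 x y d hr2deg (le_of_eq hxy.symm), hAd x y (le_of_eq hxy.symm)] at h1
    linarith
  -- parity: product vanishes at distance < d
  have hprod0 : ∀ y, G.dist u y < d → (A ^ d) u y * (A ^ (d + 1)) u y = 0 := by
    intro y hy
    rcases Nat.even_or_odd (d + G.dist u y) with hpar | hpar
    · have h1 : (A ^ (d + 1)) u y = 0 := by
        refine hE2 (d + 1) u y ?_ (by omega)
        rw [Nat.odd_iff]
        rw [Nat.even_iff] at hpar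
        omega
      rw [h1, mul_zero]
    · have h1 : (A ^ d) u y = 0 := hE2 d u y hpar (by omega)
      rw [h1, zero_mul]
  -- final computation
  have hsplitsum : (A ^ (2 * d + 1)) u u = ∑ v, (A ^ d) u v * (A ^ (d + 1)) u v := by
    have h2 : 2 * d + 1 = d + (d + 1) := by ring
    rw [h2, pow_add, Matrix.mul_apply]
    exact Finset.sum_congr rfl fun v _ => by rw [hsymm (d + 1) v u]
  rw [hsplitsum]
  rw [← Finset.sum_filter_add_sum_filter_not Finset.univ (fun v => G.dist u v = d)
    (fun v => (A ^ d) u v * (A ^ (d + 1)) u v)]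
  have hterm : ∀ v ∈ Finset.filter (fun v => G.dist u v = d) Finset.univ,
      (A ^ d) u v * (A ^ (d + 1)) u v = c * (sm * c) := by
    intro v hv
    rw [Finset.mem_filter] at hv
    rw [hAd u v (le_of_eq hv.2.symm), hAd1 u v hv.2]
  have hs1 : ∑ v ∈ Finset.filter (fun v => G.dist u v = d) Finset.univ,
      (A ^ d) u v * (A ^ (d + 1)) u v
      = ((Finset.univ.filter (fun v => G.dist u v = d)).card : ℝ) * (c * (sm * c)) := by
    rw [Finset.sum_congr rfl hterm, Finset.sum_const, nsmul_eq_mul]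
  have hs2 : ∑ v ∈ Finset.filter (fun v => ¬G.dist u v = d) Finset.univ,
      (A ^ d) u v * (A ^ (d + 1)) u v = 0 := by
    refine Finset.sum_eq_zero fun v hv => ?_
    rw [Finset.mem_filter] at hv
    have h9 := hdiam u v
    exact hprod0 v (by omega)
  rw [hs1, hs2, add_zero, ← hnc]
  field_simp
end

section
/- Let Γ be a connected k-regular graph with d+1 distinct eigenvalues and odd-girth at least 2d+1. Then the average excess (the average over all vertices u of the number k_d(u) of vertices at distance d from u) equals (n / (ã_d π_0²)) · tr A^{2d+1}, where ã_d = Σ_{i=0}^d λ_i and π_0 = ∏_{i=1}^d (k − λ_i); in particular ã_d ≠ 0. -/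
set_option linter.unusedSectionVars false
set_option maxHeartbeats 1000000

open SimpleGraph Matrix Finset Polynomial

namespace Stmt8Aux


variable {V : Type*} {G : SimpleGraph V}

lemma path_length_one_of_edge {u v : V} {p : G.Walk v u} (hp : p.IsPath)
    (he : s(u, v) ∈ p.edges) : p.length = 1 := by
  cases p with
  | nil => simp at he
  | cons h' q =>
    rename_i c
    rw [SimpleGraph.Walk.edges_cons, List.mem_cons] at he
    rcases he with he | he
    · rw [Sym2.eq_iff] at he
      rcases he with ⟨h1, h2⟩ | ⟨h1, h2⟩
      · exfalso; subst h2; exact G.loopless.irrefl _ h'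
      · subst h1
        cases q with
        | nil => simp
        | cons h'' r =>
          exfalso
          have := (hp.of_cons).support_nodup
          rw [SimpleGraph.Walk.support_cons, List.nodup_cons] at this
          exact this.1 (r.end_mem_support)
    · exfalso
      have hv : v ∈ q.support := SimpleGraph.Walk.snd_mem_support_of_mem_edges q he
      have := hp.support_nodup
      rw [SimpleGraph.Walk.support_cons, List.nodup_cons] at this
      exact this.1 hv

lemma length_rotate {u v : V} [DecidableEq V] (c : G.Walk v v) (h : u ∈ c.support) :
    (c.rotate u h).length = c.length := by
  rw [SimpleGraph.Walk.rotate, SimpleGraph.Walk.length_append, Nat.add_comm,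
    ← SimpleGraph.Walk.length_append, SimpleGraph.Walk.take_spec]

lemma oddWalk_cycle [DecidableEq V] : ∀ (L : ℕ), Odd L → ∀ (u : V) (w : G.Walk u u),
    w.length = L → ∃ (x : V) (c : G.Walk x x), c.IsCycle ∧ Odd c.length ∧ c.length ≤ L := by
  intro L
  induction L using Nat.strong_induction_on with
  | _ L ih =>
    intro hodd u w hw
    by_cases hnd : w.support.tail.Nodup
    · -- w is a cycle
      cases w with
      | nil => exact absurd (hw ▸ hodd) (by simp)
      | cons h q =>
        rename_i b
        have hlen : (SimpleGraph.Walk.cons h q).length = L := hw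
        have hq : q.IsPath := SimpleGraph.Walk.IsPath.mk' (by
          simpa [SimpleGraph.Walk.support_cons] using hnd)
        have hL1 : L ≠ 1 := by
          rintro rfl
          rw [SimpleGraph.Walk.length_cons] at hlen
          have : q.length = 0 := by omega
          have := SimpleGraph.Walk.eq_of_length_eq_zero this
          subst this
          exact G.loopless.irrefl _ h
        have he : s(u, b) ∉ q.edges := by
          intro he
          have := path_length_one_of_edge hq he
          rw [SimpleGraph.Walk.length_cons, this] at hlen
          rw [Nat.odd_iff] at hodd
          omega
        refine ⟨u, SimpleGraph.Walk.cons h q, ?_, hw ▸ hodd, hw ▸ le_rfl⟩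
        exact (SimpleGraph.Walk.cons_isCycle_iff q h).mpr ⟨hq, he⟩
    · -- split
      obtain ⟨a, ha⟩ := by
        rw [List.nodup_iff_count_le_one] at hnd
        push_neg at hnd
        exact hnd
      have ha2 : 2 ≤ w.support.tail.count a := ha
      have hamem : a ∈ w.support := by
        apply List.mem_of_mem_tail
        exact List.count_pos_iff.mp (by omega)
      set w' := w.rotate a hamem with hw'
      have hlen' : w'.length = L := by rw [hw', length_rotate, hw]
      have hcount : 2 ≤ w'.support.tail.count a := by
        rw [(SimpleGraph.Walk.support_rotate w a hamem).perm.count_eq a]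
        exact ha2
      cases hw'' : w' with
      | nil => rw [hw''] at hlen'; exact absurd (hlen' ▸ hodd) (by simp)
      | cons h q =>
        rw [hw''] at hlen' hcount
        rw [SimpleGraph.Walk.support_cons, List.tail_cons] at hcount
        have haq : a ∈ q.support := by
          have : 0 < q.support.count a := by omega
          exact List.count_pos_iff.mp this
        set q1 := q.takeUntil a haq with hq1
        set q2 := q.dropUntil a haq with hq2
        have hspec : q1.append q2 = q := SimpleGraph.Walk.take_spec q haq
        have hlsum : q1.length + q2.length = q.length := by
          rw [← SimpleGraph.Walk.length_append, hspec]
        have hq2pos : 1 ≤ q2.length := by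
          by_contra hq2
          have hz : q2.length = 0 := by omega
          have htail : q2.support.tail = [] := by
            apply List.eq_nil_of_length_eq_zero
            rw [List.length_tail, q2.length_support, hz]
          have hc1 : q1.support.count a = 1 :=
            SimpleGraph.Walk.count_support_takeUntil_eq_one q haq
          have hq1s : q.support = q1.support := by
            conv_lhs => rw [← hspec]
            rw [SimpleGraph.Walk.support_append, htail, List.append_nil]
          rw [hq1s, hc1] at hcount
          omega
        -- two closed walks: cons h q1 : Walk a a, and q2 : Walk a a
        have hL : (1 + q1.length) + q2.length = L := by
          rw [← hlen', SimpleGraph.Walk.length_cons]; omega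
        have hone : Odd (1 + q1.length) ∨ Odd q2.length := by
          rcases Nat.even_or_odd q2.length with he2 | ho2
          · left
            rw [Nat.odd_iff] at hodd ⊢
            rw [Nat.even_iff] at he2
            omega
          · right; exact ho2
        rcases hone with ho | ho
        · exact ih (1 + q1.length) (by omega) ho a (SimpleGraph.Walk.cons h q1)
            (by rw [SimpleGraph.Walk.length_cons]; omega) |>.imp
            fun x ⟨c, hc⟩ => ⟨c, hc.1, hc.2.1, hc.2.2.trans (by omega)⟩
        · exact ih q2.length (by omega) ho a q2 rfl |>.imp
            fun x ⟨c, hc⟩ => ⟨c, hc.1, hc.2.1, hc.2.2.trans (by omega)⟩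



variable {V : Type*} [Fintype V] [DecidableEq V]

lemma pow_mulVec_eigen (A : Matrix V V ℝ) {x : V → ℝ} {μ : ℝ}
    (h : A *ᵥ x = μ • x) (m : ℕ) : (A ^ m) *ᵥ x = (μ ^ m) • x := by
  induction m with
  | zero => simp
  | succ m ih =>
    rw [pow_succ, ← Matrix.mulVec_mulVec, h, Matrix.mulVec_smul, ih, smul_smul, pow_succ]
    ring_nf

lemma aeval_mulVec_eigen (A : Matrix V V ℝ) {x : V → ℝ} {μ : ℝ}
    (h : A *ᵥ x = μ • x) (f : Polynomial ℝ) :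
    (Polynomial.aeval A f) *ᵥ x = (f.eval μ) • x := by
  induction f using Polynomial.induction_on' with
  | add p q hp hq => rw [map_add, Matrix.add_mulVec, hp, hq, Polynomial.eval_add, add_smul]
  | monomial m a =>
    rw [Polynomial.aeval_monomial, Polynomial.eval_monomial, Algebra.algebraMap_eq_smul_one,
      smul_mul_assoc, one_mul, Matrix.smul_mulVec, pow_mulVec_eigen A h m,
      smul_smul]

lemma aeval_eq_zero_of_spectrum {A : Matrix V V ℝ} (hA : A.IsHermitian)
    (f : Polynomial ℝ) (hf : ∀ μ ∈ spectrum ℝ A, f.eval μ = 0) :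
    Polynomial.aeval A f = 0 := by
  have h1 : Matrix.toEuclideanLin (Polynomial.aeval A f) = 0 := by
    apply hA.eigenvectorBasis.toBasis.ext
    intro j
    rw [OrthonormalBasis.coe_toBasis]
    have h2 := aeval_mulVec_eigen A (hA.mulVec_eigenvectorBasis j) f
    have hμ : f.eval (hA.eigenvalues j) = 0 :=
      hf _ (hA.eigenvalues_mem_spectrum_real j)
    rw [hμ, zero_smul] at h2
    rw [Matrix.toEuclideanLin_apply]
    rw [h2]
    simp
  exact (LinearEquiv.map_eq_zero_iff Matrix.toEuclideanLin).mp h1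



variable {V : Type*} [Fintype V] [DecidableEq V] {G : SimpleGraph V}

lemma eigen_const [DecidableRel G.Adj] {k : ℕ}
    (hconn : G.Connected) (hreg : G.IsRegularOfDegree k) {x : V → ℝ}
    (hx : G.adjMatrix ℝ *ᵥ x = (k : ℝ) • x) (v w : V) : x v = x w := by
  have hne : Nonempty V := hconn.nonempty
  obtain ⟨v₀, -, hv₀⟩ := Finset.exists_max_image Finset.univ x
    ⟨Classical.arbitrary V, Finset.mem_univ _⟩
  have step : ∀ a, x a = x v₀ → ∀ b, G.Adj a b → x b = x v₀ := by
    intro a ha b hab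
    by_contra hb
    have hblt : x b < x v₀ := lt_of_le_of_ne (hv₀ b (Finset.mem_univ _)) hb
    have hsum : (G.adjMatrix ℝ *ᵥ x) a = ∑ w ∈ G.neighborFinset a, x w :=
      SimpleGraph.adjMatrix_mulVec_apply _ _ _
    have hlt : ∑ w ∈ G.neighborFinset a, x w < ∑ w ∈ G.neighborFinset a, x v₀ := by
      apply Finset.sum_lt_sum
      · intro i _; exact hv₀ i (Finset.mem_univ _)
      · exact ⟨b, (G.mem_neighborFinset a b).mpr hab, hblt⟩
    rw [Finset.sum_const, G.card_neighborFinset_eq_degree, hreg a, nsmul_eq_mul] at hlt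
    have heq : (G.adjMatrix ℝ *ᵥ x) a = (k : ℝ) * x a := by rw [hx]; simp
    rw [heq, ha] at hsum
    rw [← hsum] at hlt
    exact absurd hlt (lt_irrefl _)
  have key : ∀ (a b : V), G.Walk a b → x a = x v₀ → x b = x v₀ := by
    intro a b p
    induction p with
    | nil => exact id
    | cons h q ih => intro ha; exact ih (step _ ha _ h)
  obtain ⟨p⟩ := hconn v₀ v
  obtain ⟨q⟩ := hconn v₀ w
  rw [key _ _ p rfl, key _ _ q rfl]

def wtake {u v : V} : (p : G.Walk u v) → (n : ℕ) → G.Walk u (p.getVert n)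
  | p, 0 => SimpleGraph.Walk.nil.copy rfl (p.getVert_zero).symm
  | .nil, (_ + 1) => SimpleGraph.Walk.nil
  | .cons h q, (n + 1) => SimpleGraph.Walk.cons h (wtake q n)

lemma wtake_length {u v : V} (p : G.Walk u v) (n : ℕ) :
    (wtake p n).length = min n p.length := by
  induction p generalizing n with
  | nil => cases n <;> simp [wtake]
  | cons h q ih =>
    cases n with
    | zero => simp [wtake]
    | succ n => simp [wtake, ih, SimpleGraph.Walk.length_cons, Nat.succ_min_succ]

lemma drop_length {u v : V} (p : G.Walk u v) (n : ℕ) :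
    (p.drop n).length = p.length - n := by
  induction p generalizing n with
  | nil => cases n <;> simp [SimpleGraph.Walk.drop]
  | cons h q ih =>
    cases n with
    | zero => simp [SimpleGraph.Walk.drop]
    | succ n => simp [SimpleGraph.Walk.drop, ih, SimpleGraph.Walk.length_cons]




variable {V : Type*} [Fintype V] [DecidableEq V] {G : SimpleGraph V}

theorem main {V : Type*} [Fintype V] [DecidableEq V] (G : SimpleGraph V)
    [DecidableRel G.Adj] (k d : ℕ) (lam : Fin (d + 1) → ℝ)
    (hconn : G.Connected) (hreg : G.IsRegularOfDegree k)
    (hanti : StrictAnti lam) (h0 : lam 0 = (k : ℝ))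
    (hspec : spectrum ℝ (G.adjMatrix ℝ) = Set.range lam)
    (hoddcycle : ∃ (u : V) (w : G.Walk u u), w.IsCycle ∧ Odd w.length)
    (hog : ∀ (u : V) (w : G.Walk u u), w.IsCycle → Odd w.length → 2 * d + 1 ≤ w.length) :
    (∑ u : V, ((Finset.univ.filter (fun v => G.dist u v = d)).card : ℝ)) / (Fintype.card V : ℝ)
      = (Fintype.card V : ℝ) /
          ((∑ i : Fin (d + 1), lam i) *
            (∏ i ∈ Finset.Ioi (0 : Fin (d + 1)), ((k : ℝ) - lam i)) ^ 2) *
          Matrix.trace ((G.adjMatrix ℝ) ^ (2 * d + 1)) ∧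
      (∑ i : Fin (d + 1), lam i) ≠ 0 := by
  classical
  haveI : Nonempty V := hconn.nonempty
  set A := G.adjMatrix ℝ with hAdef
  set n : ℝ := (Fintype.card V : ℝ) with hndef
  have hnpos : (0 : ℝ) < n := by
    rw [hndef]; exact_mod_cast Fintype.card_pos
  set pi0 : ℝ := ∏ i ∈ Finset.Ioi (0 : Fin (d + 1)), ((k : ℝ) - lam i) with hπdef
  set aT : ℝ := ∑ i : Fin (d + 1), lam i with haTdef
  -- basic matrix facts
  have hsymm : Aᵀ = A := G.isSymm_adjMatrix
  have hA : A.IsHermitian := by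
    show Aᴴ = A
    ext i j
    rw [Matrix.conjTranspose_apply, star_trivial]
    exact congrFun (congrFun hsymm i) j
  -- polynomials
  set p : Polynomial ℝ := ∏ i ∈ Finset.Ioi (0 : Fin (d + 1)), (X - C (lam i)) with hpdef
  set f : Polynomial ℝ := ∏ i : Fin (d + 1), (X - C (lam i)) with hfdef
  have hIoi : Finset.Ioi (0 : Fin (d + 1)) = Finset.univ.erase 0 := by
    ext i
    simp [Finset.mem_Ioi, Finset.mem_erase, Fin.pos_iff_ne_zero]
  have hfp : f = (X - C (k : ℝ)) * p := by
    rw [hfdef, hpdef, hIoi, ← h0]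
    exact (Finset.mul_prod_erase Finset.univ _ (Finset.mem_univ 0)).symm
  have hf0 : Polynomial.aeval A f = 0 := by
    apply aeval_eq_zero_of_spectrum hA
    intro μ hμ
    rw [hspec] at hμ
    obtain ⟨i, rfl⟩ := hμ
    rw [Polynomial.eval_prod]
    exact Finset.prod_eq_zero (Finset.mem_univ i) (by simp)
  set P : Matrix V V ℝ := Polynomial.aeval A p with hPdef
  have hAP : A * P = (k : ℝ) • P := by
    have h1 : Polynomial.aeval A ((X - C (k : ℝ)) * p) = 0 := by rw [← hfp]; exact hf0
    rw [_root_.map_mul, map_sub, Polynomial.aeval_X, Polynomial.aeval_C,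
      Algebra.algebraMap_eq_smul_one, Matrix.sub_mul, Matrix.smul_mul, Matrix.one_mul,
      sub_eq_zero] at h1
    exact h1
  have hπpos : (0 : ℝ) < pi0 := by
    rw [hπdef]
    apply Finset.prod_pos
    intro i hi
    rw [Finset.mem_Ioi] at hi
    have := hanti hi
    rw [h0] at this
    linarith
  -- walk counting lemmas
  have W1 : ∀ (m : ℕ) (u v : V), (A ^ m) u v
      = ((Fintype.card {q : G.Walk u v | q.length = m}) : ℝ) := by
    intro m u v
    rw [hAdef, SimpleGraph.adjMatrix_pow_apply_eq_card_walk]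
  have Wnonneg : ∀ (m : ℕ) (u v : V), 0 ≤ (A ^ m) u v := by
    intro m u v; rw [W1]; positivity
  have Wzero : ∀ (m : ℕ) (u v : V), (∀ q : G.Walk u v, q.length ≠ m) → (A ^ m) u v = 0 := by
    intro m u v h
    rw [W1]
    norm_cast
    rw [Fintype.card_eq_zero_iff]
    exact ⟨fun q => h q.1 q.2⟩
  have Wlt : ∀ (m : ℕ) (u v : V), m < G.dist u v → (A ^ m) u v = 0 := by
    intro m u v h
    apply Wzero
    intro q hq
    have := G.dist_le q
    omega
  have Wpar : ∀ (m : ℕ) (u v : V), Odd (m + G.dist u v) → m + G.dist u v < 2 * d + 1 →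
      (A ^ m) u v = 0 := by
    intro m u v hodd hlt
    apply Wzero
    intro q hq
    have hreach : G.Reachable v u := SimpleGraph.Reachable.symm ⟨q⟩
    obtain ⟨r, hr⟩ := hreach.exists_walk_length_eq_dist
    have hdvu : G.dist v u = G.dist u v := G.dist_comm
    set c := q.append r with hcdef
    have hclen : c.length = m + G.dist u v := by
      rw [hcdef, SimpleGraph.Walk.length_append, hq, hr, hdvu]
    obtain ⟨x, cyc, hcyc, hcodd, hcle⟩ :=
      oddWalk_cycle (m + G.dist u v) hodd u c hclen
    have := hog x cyc hcyc hcodd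
    omega
  have Wsymm : ∀ (m : ℕ) (u v : V), (A ^ m) u v = (A ^ m) v u := by
    intro m u v
    have : (A ^ m)ᵀ = A ^ m := by rw [Matrix.transpose_pow, hsymm]
    conv_lhs => rw [← this, Matrix.transpose_apply]
  -- degree facts
  have hpmonic : p.Monic := Polynomial.monic_prod_of_monic _ _ (fun i _ => monic_X_sub_C _)
  have hcardIoi : (Finset.Ioi (0 : Fin (d + 1))).card = d := by
    rw [hIoi, Finset.card_erase_of_mem (Finset.mem_univ 0), Finset.card_univ, Fintype.card_fin]
    omega
  have hpdeg : p.natDegree = d := by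
    rw [hpdef, Polynomial.natDegree_prod_of_monic _ _ (fun i _ => monic_X_sub_C _)]
    simp [hcardIoi]
  have hfmonic : f.Monic := Polynomial.monic_prod_of_monic _ _ (fun i _ => monic_X_sub_C _)
  have hfdeg : f.natDegree = d + 1 := by
    rw [hfdef, Polynomial.natDegree_prod_of_monic _ _ (fun i _ => monic_X_sub_C _)]
    simp
  have hfcoeffd : f.coeff d = -aT := by
    have h1 : f.nextCoeff = -aT := by
      rw [hfdef, Polynomial.prod_X_sub_C_nextCoeff, haTdef]
    rw [Polynomial.nextCoeff_of_natDegree_pos (by rw [hfdeg]; omega), hfdeg] at h1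
    simpa using h1
  -- entries expansions
  have hPsum : ∀ u v : V, P u v = ∑ j ∈ Finset.range (d + 1), p.coeff j * (A ^ j) u v := by
    intro u v
    rw [hPdef, Polynomial.aeval_eq_sum_range' (n := d + 1) (by omega)]
    rw [Matrix.sum_apply]
    exact Finset.sum_congr rfl fun j _ => by rw [Matrix.smul_apply, smul_eq_mul]
  have hfsum : ∀ u v : V, (0 : ℝ) = ∑ j ∈ Finset.range (d + 2), f.coeff j * (A ^ j) u v := by
    intro u v
    have : (Polynomial.aeval A f) u v = 0 := by rw [hf0]; rfl
    rw [← this, Polynomial.aeval_eq_sum_range' (n := d + 2) (by omega), Matrix.sum_apply]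
    exact (Finset.sum_congr rfl fun j _ => by rw [Matrix.smul_apply, smul_eq_mul]).symm
  -- P is the constant matrix pi0 / n
  have hcolconst : ∀ (w v v' : V), P v w = P v' w := by
    intro w v v'
    apply eigen_const hconn hreg (x := fun v => P v w)
    funext a
    have h1 : (A *ᵥ fun v => P v w) a = (A * P) a w := by
      simp [Matrix.mulVec, dotProduct, Matrix.mul_apply]
    rw [h1, hAP]
    simp
  have hPsymm : ∀ v w : V, P v w = P w v := by
    intro v w
    have h1 : P v w = ∑ j ∈ Finset.range (d + 1), p.coeff j * (A ^ j) v w := hPsum v w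
    rw [hPsum w v, h1]
    exact Finset.sum_congr rfl fun j _ => by rw [Wsymm]
  have hPconstAll : ∀ v w v' w' : V, P v w = P v' w' := by
    intro v w v' w'
    calc P v w = P v' w := hcolconst w v v'
      _ = P w v' := hPsymm v' w
      _ = P w' v' := hcolconst v' w w'
      _ = P v' w' := hPsymm w' v'
  have hones : A *ᵥ (fun _ => (1 : ℝ)) = (k : ℝ) • (fun _ => (1 : ℝ)) := by
    funext a
    rw [hAdef, SimpleGraph.adjMatrix_mulVec_apply]
    simp [hreg a]
  have hPval : ∀ v w : V, P v w = pi0 / n := by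
    have hPones := aeval_mulVec_eigen A hones p
    have hevalp : p.eval (k : ℝ) = pi0 := by
      rw [hpdef, Polynomial.eval_prod, hπdef]
      exact Finset.prod_congr rfl fun i _ => by simp
    intro v w
    have h2 : (P *ᵥ fun _ => (1:ℝ)) v = ∑ w' : V, P v w' := by
      simp [Matrix.mulVec, dotProduct]
    have h3 : ∑ w' : V, P v w' = n * P v w := by
      rw [Finset.sum_congr rfl fun w' _ => hPconstAll v w' v w]
      rw [Finset.sum_const, hndef]
      simp [nsmul_eq_mul, Finset.card_univ]
    have h4 : (P *ᵥ fun _ => (1:ℝ)) v = pi0 := by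
      rw [hPones, hevalp]; simp
    rw [h2, h3] at h4
    rw [eq_div_iff (ne_of_gt hnpos)]
    linarith
  -- diameter bound
  have hdiam : ∀ u v : V, G.dist u v ≤ d := by
    intro u v
    by_contra hlt
    push_neg at hlt
    have h1 : P u v = 0 := by
      rw [hPsum]
      apply Finset.sum_eq_zero
      intro j hj
      rw [Finset.mem_range] at hj
      rw [Wlt j u v (by omega), mul_zero]
    rw [hPval] at h1
    have hpine : pi0 ≠ 0 := ne_of_gt hπpos
    field_simp at h1
    exact hpine (by simpa using h1)
  -- key entry values
  have hAd : ∀ u v : V, G.dist u v = d → (A ^ d) u v = pi0 / n := by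
    intro u v huv
    have h1 : P u v = (A ^ d) u v := by
      rw [hPsum, Finset.sum_eq_single d]
      · rw [← hpdeg, hpmonic.coeff_natDegree, one_mul]
      · intro j hj hne
        rw [Finset.mem_range] at hj
        rw [Wlt j u v (by omega), mul_zero]
      · intro h; exact absurd (Finset.self_mem_range_succ d) h
    rw [← h1, hPval]
  have hAd1 : ∀ u v : V, G.dist u v = d → (A ^ (d + 1)) u v = aT * (pi0 / n) := by
    intro u v huv
    have h1 := hfsum u v
    rw [Finset.sum_range_succ] at h1
    have h2 : ∑ j ∈ Finset.range (d + 1), f.coeff j * (A ^ j) u v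
        = f.coeff d * (A ^ d) u v := by
      rw [Finset.sum_eq_single d]
      · intro j hj hne
        rw [Finset.mem_range] at hj
        rw [Wlt j u v (by omega), mul_zero]
      · intro h; exact absurd (Finset.self_mem_range_succ d) h
    have h3 : f.coeff (d + 1) = 1 := by rw [← hfdeg]; exact hfmonic.coeff_natDegree
    rw [h2, h3, one_mul, hfcoeffd, hAd u v huv] at h1
    linarith
  -- vanishing off distance d
  have hvanish : ∀ u v : V, G.dist u v ≠ d → (A ^ d) u v * (A ^ (d + 1)) v u = 0 := by
    intro u v hne
    rcases lt_or_gt_of_ne hne with hlt | hgt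
    · -- dist < d : parity argument
      set l := G.dist u v with hldef
      rcases Nat.even_or_odd (d + l) with heven | hodd
      · have hodd1 : Odd (d + 1 + G.dist v u) := by
          rw [G.dist_comm, ← hldef, Nat.odd_iff, Nat.even_iff] at *
          omega
        rw [Wpar (d+1) v u hodd1 (by rw [G.dist_comm, ← hldef]; omega), mul_zero]
      · rw [Wpar d u v hodd (by omega), zero_mul]
    · rw [Wlt d u v hgt, zero_mul]
  -- diagonal formula
  have hdiag : ∀ u : V, (A ^ (2 * d + 1)) u u
      = ((Finset.univ.filter (fun v => G.dist u v = d)).card : ℝ) * (aT * pi0 ^ 2 / n ^ 2) := by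
    intro u
    have h1 : (2 : ℕ) * d + 1 = d + (d + 1) := by omega
    rw [h1, pow_add, Matrix.mul_apply]
    rw [← Finset.sum_filter_add_sum_filter_not Finset.univ (fun v => G.dist u v = d)]
    have h2 : ∑ v ∈ Finset.univ.filter (fun v => ¬ G.dist u v = d),
        (A ^ d) u v * (A ^ (d+1)) v u = 0 := by
      apply Finset.sum_eq_zero
      intro v hv
      rw [Finset.mem_filter] at hv
      exact hvanish u v hv.2
    rw [h2, add_zero]
    have h3 : ∀ v ∈ Finset.univ.filter (fun v => G.dist u v = d),
        (A ^ d) u v * (A ^ (d+1)) v u = aT * pi0 ^ 2 / n ^ 2 := by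
      intro v hv
      rw [Finset.mem_filter] at hv
      rw [hAd u v hv.2, Wsymm (d+1) v u, hAd1 u v hv.2]
      ring
    rw [Finset.sum_congr rfl h3, Finset.sum_const, nsmul_eq_mul]
  -- trace formula
  set S : ℝ := ∑ u : V, ((Finset.univ.filter (fun v => G.dist u v = d)).card : ℝ) with hSdef
  have htrace : Matrix.trace (A ^ (2 * d + 1)) = S * (aT * pi0 ^ 2 / n ^ 2) := by
    show ∑ u : V, (A ^ (2*d+1)).diag u = _
    rw [hSdef, Finset.sum_mul]
    exact Finset.sum_congr rfl fun u _ => by rw [Matrix.diag_apply, hdiag u]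
  -- existence of a cycle of length exactly 2d+1
  have hQ : ∃ L, Odd L ∧ ∃ (x : V) (c : G.Walk x x), c.IsCycle ∧ c.length = L := by
    obtain ⟨u, w, hw1, hw2⟩ := hoddcycle
    exact ⟨w.length, hw2, u, w, hw1, rfl⟩
  set g := Nat.find hQ with hgdef
  obtain ⟨hgodd, x, c, hcyc, hclen⟩ := Nat.find_spec hQ
  have hg1 : 2 * d + 1 ≤ g := by
    have := hog x c hcyc (hclen ▸ hgodd)
    omega
  have hglt : g < 2 * d + 3 := by
    by_contra hge
    push_neg at hge
    set v := c.getVert (d + 1) with hvdef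
    have hd1g : d + 1 ≤ c.length := by omega
    set q₁ := wtake c (d + 1) with hq₁def
    have hq₁len : q₁.length = d + 1 := by
      rw [hq₁def, wtake_length, hclen]; omega
    set q₂ := c.drop (d + 1) with hq₂def
    have hq₂len : q₂.length = g - (d + 1) := by
      rw [hq₂def, drop_length, hclen]
    set l := G.dist x v with hldef
    have hld : l ≤ d := hdiam x v
    obtain ⟨r, hr⟩ := (hconn x v).exists_walk_length_eq_dist
    set c₁ := q₁.append r.reverse with hc₁def
    have hc₁len : c₁.length = (d + 1) + l := by
      rw [hc₁def, SimpleGraph.Walk.length_append, SimpleGraph.Walk.length_reverse,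
        hq₁len, hr, hldef]
    set c₂ := r.append q₂ with hc₂def
    have hc₂len : c₂.length = l + (g - (d + 1)) := by
      rw [hc₂def, SimpleGraph.Walk.length_append, hr, hq₂len, hldef]
    rcases Nat.even_or_odd ((d + 1) + l) with heven | hodd
    · -- c₂ odd
      have hodd2 : Odd (l + (g - (d + 1))) := by
        rw [Nat.odd_iff] at hgodd ⊢
        rw [Nat.even_iff] at heven
        omega
      obtain ⟨y, cy, hcy, hcyodd, hcyle⟩ :=
        oddWalk_cycle _ hodd2 x c₂ hc₂len
      have : g ≤ cy.length := by
        have := Nat.find_min hQ (m := cy.length)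
        by_contra hlt2
        push_neg at hlt2
        exact this hlt2 ⟨hcyodd, y, cy, hcy, rfl⟩
      omega
    · obtain ⟨y, cy, hcy, hcyodd, hcyle⟩ :=
        oddWalk_cycle _ hodd x c₁ hc₁len
      have : g ≤ cy.length := by
        have := Nat.find_min hQ (m := cy.length)
        by_contra hlt2
        push_neg at hlt2
        exact this hlt2 ⟨hcyodd, y, cy, hcy, rfl⟩
      omega
  have hgeq : g = 2 * d + 1 := by
    rw [Nat.odd_iff] at hgodd
    omega
  -- trace positivity
  have htrpos : 0 < Matrix.trace (A ^ (2 * d + 1)) := by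
    show 0 < ∑ u : V, (A ^ (2*d+1)).diag u
    apply Finset.sum_pos'
    · intro u _; exact Wnonneg _ u u
    · refine ⟨x, Finset.mem_univ x, ?_⟩
      rw [Matrix.diag_apply, W1]
      have : 0 < Fintype.card {q : G.Walk x x | q.length = 2 * d + 1} := by
        rw [Fintype.card_pos_iff]
        exact ⟨⟨c, by rw [Set.mem_setOf_eq, hclen]; exact hgeq⟩⟩
      exact_mod_cast this
  -- conclude
  have haT : aT ≠ 0 := by
    intro h
    rw [htrace, h] at htrpos
    simp at htrpos
  constructor
  · rw [htrace]
    have hπ : pi0 ≠ 0 := ne_of_gt hπpos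
    have hn : n ≠ 0 := ne_of_gt hnpos
    field_simp
  · exact haT

end Stmt8Aux

open SimpleGraph Matrix Finset

/-- In a connected `k`-regular graph on `n` vertices with `d+1` distinct
eigenvalues `k = λ₀ > ⋯ > λ_d` and finite odd-girth at least `2d+1`, the average
excess equals `(n / (ã_d π₀²)) · tr A^{2d+1}`; in particular `ã_d ≠ 0`. -/
theorem stmt_8 {V : Type*} [Fintype V] [DecidableEq V] (G : SimpleGraph V)
    [DecidableRel G.Adj] (k d : ℕ) (lam : Fin (d + 1) → ℝ)
    (hconn : G.Connected) (hreg : G.IsRegularOfDegree k)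
    (hanti : StrictAnti lam) (h0 : lam 0 = (k : ℝ))
    (hspec : spectrum ℝ (G.adjMatrix ℝ) = Set.range lam)
    (hoddcycle : ∃ (u : V) (w : G.Walk u u), w.IsCycle ∧ Odd w.length)
    (hog : ∀ (u : V) (w : G.Walk u u), w.IsCycle → Odd w.length → 2 * d + 1 ≤ w.length) :
    (∑ u : V, ((Finset.univ.filter (fun v => G.dist u v = d)).card : ℝ)) / (Fintype.card V : ℝ)
      = (Fintype.card V : ℝ) /
          ((∑ i : Fin (d + 1), lam i) *
            (∏ i ∈ Finset.Ioi (0 : Fin (d + 1)), ((k : ℝ) - lam i)) ^ 2) *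
          Matrix.trace ((G.adjMatrix ℝ) ^ (2 * d + 1)) ∧
      (∑ i : Fin (d + 1), lam i) ≠ 0 :=
  Stmt8Aux.main G k d lam hconn hreg hanti h0 hspec hoddcycle hog
end

section
/- Let Γ be a connected regular graph with d+1 distinct eigenvalues whose predistance polynomials p_0, …, p_d satisfy the three-term recurrence x p_i = β_{i−1} p_{i−1} + α_i p_i + γ_{i+1} p_{i+1}. If Γ has odd-girth at least 2d+1, then α_i = 0 for all i < d, and each p_i is an even polynomial when i is even and an odd polynomial when i is odd. -/
open SimpleGraph Matrix Polynomial Finset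

section AuxGraph

variable {V : Type*} [DecidableEq V] {G : SimpleGraph V}

lemma split1 {x u : V} (w : G.Walk x u) (hx : x ∈ w.support.tail) :
    ∃ (c : G.Walk x x) (r : G.Walk x u),
      c.length + r.length = w.length ∧ 1 ≤ c.length := by
  cases w with
  | nil => simp at hx
  | cons h q =>
    rename_i y
    rw [Walk.support_cons, List.tail_cons] at hx
    refine ⟨Walk.cons h (q.takeUntil x hx), q.dropUntil x hx, ?_, ?_⟩
    · have := congrArg Walk.length (q.take_spec hx)
      rw [Walk.length_append] at this
      simp [Walk.length_cons]
      omega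
    · simp [Walk.length_cons]

lemma path_edge {u v : V} (h : G.Adj u v) (q : G.Walk v u) (hq : q.IsPath)
    (he : s(u, v) ∈ q.edges) : q.length = 1 := by
  cases q with
  | nil => simp at he
  | cons h' q' =>
    rename_i y
    rw [Walk.edges_cons, List.mem_cons] at he
    rw [Walk.cons_isPath_iff] at hq
    rcases he with he | he
    · rw [Sym2.eq_iff] at he
      rcases he with ⟨rfl, _⟩ | ⟨rfl, _⟩
      · exact absurd rfl h.ne
      · have : q' = Walk.nil := by
          have := SimpleGraph.Path.loop_eq ⟨q', hq.1⟩
          simpa [SimpleGraph.Path.nil] using congrArg Subtype.val this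
        simp [this]
    · exact absurd (q'.snd_mem_support_of_mem_edges he) hq.2

lemma exists_odd_cycle : ∀ (ℓ : ℕ), ∀ (u : V) (w : G.Walk u u),
    w.length = ℓ → Odd ℓ →
    ∃ (x : V) (c : G.Walk x x), c.IsCycle ∧ Odd c.length ∧ c.length ≤ ℓ := by
  intro ℓ
  induction ℓ using Nat.strong_induction_on with
  | _ ℓ IH =>
  intro u w hlen hodd
  cases w with
  | nil =>
    simp only [Walk.length_nil] at hlen
    exact absurd (hlen ▸ hodd) (by simp)
  | cons h q =>
    rename_i v
    by_cases hqp : q.IsPath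
    · by_cases he : s(u, v) ∈ q.edges
      · have h1 := path_edge h q hqp he
        rw [Walk.length_cons, h1] at hlen; rw [Nat.odd_iff] at hodd
        omega
      · exact ⟨u, Walk.cons h q, SimpleGraph.Path.cons_isCycle ⟨q, hqp⟩ h he,
          hlen ▸ hodd, hlen ▸ le_refl _⟩
    · rw [Walk.isPath_def] at hqp
      obtain ⟨x, hdup⟩ := List.exists_duplicate_iff_not_nodup.2 hqp
      have hcount : 2 ≤ q.support.count x := List.duplicate_iff_two_le_count.1 hdup
      have hxs : x ∈ q.support := hdup.mem
      have hsplit : q.support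
          = (q.takeUntil x hxs).support ++ (q.dropUntil x hxs).support.tail := by
        conv_lhs => rw [← q.take_spec hxs]
        rw [Walk.support_append]
      have hx2 : x ∈ (q.dropUntil x hxs).support.tail := by
        rw [← List.count_pos_iff]
        have := Walk.count_support_takeUntil_eq_one q hxs
        rw [hsplit, List.count_append, this] at hcount
        omega
      obtain ⟨c, r, hcr, hc1⟩ := split1 (q.dropUntil x hxs) hx2
      have hlens : (q.takeUntil x hxs).length + (q.dropUntil x hxs).length = q.length := by
        have := congrArg Walk.length (q.take_spec hxs)
        rwa [Walk.length_append] at this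
      set a := c.length with ha
      set b := ((Walk.cons h ((q.takeUntil x hxs).append r)) : G.Walk u u).length with hb
      have hab : a + b = ℓ := by
        rw [hb, Walk.length_cons, Walk.length_append]
        rw [Walk.length_cons] at hlen
        omega
      have hb1 : 1 ≤ b := by rw [hb, Walk.length_cons]; omega
      have hoddab : Odd a ∨ Odd b := by
        rw [Nat.odd_iff] at hodd ⊢
        rw [Nat.odd_iff]
        omega
      rcases hoddab with hoa | hob
      · obtain ⟨y, c', hc', ho', hle'⟩ := IH a (by omega) x c rfl hoa
        exact ⟨y, c', hc', ho', by omega⟩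
      · obtain ⟨y, c', hc', ho', hle'⟩ := IH b (by omega) u _ rfl hob
        exact ⟨y, c', hc', ho', by omega⟩

end AuxGraph

section AuxPoly

/-- parity predicate: `f` only has coefficients in degrees `≡ i (mod 2)`. -/
def ParP (i : ℕ) (f : Polynomial ℝ) : Prop := ∀ j, (i + j) % 2 = 1 → f.coeff j = 0

lemma parP_mul {a b : ℕ} {f g : Polynomial ℝ} (hf : ParP a f) (hg : ParP b g) :
    ParP (a + b) (f * g) := by
  intro j hj
  rw [Polynomial.coeff_mul]
  refine Finset.sum_eq_zero fun x hx => ?_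
  rw [Finset.HasAntidiagonal.mem_antidiagonal] at hx
  have : (a + x.1) % 2 = 1 ∨ (b + x.2) % 2 = 1 := by omega
  rcases this with h | h
  · rw [hf _ h, zero_mul]
  · rw [hg _ h, mul_zero]

lemma parP_X : ParP 1 (Polynomial.X : Polynomial ℝ) := by
  intro j hj
  rw [Polynomial.coeff_X]
  have : j ≠ 1 := by omega
  simp [Ne.symm this]

lemma parP_one : ParP 0 (1 : Polynomial ℝ) := by
  intro j hj
  rw [Polynomial.coeff_one]
  have : j ≠ 0 := by omega
  simp [this]

lemma tr_odd_poly {N : Type*} [Fintype N] [DecidableEq N] (A : Matrix N N ℝ) (D : ℕ)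
    (hdiag : ∀ m, m % 2 = 1 → m < D → Matrix.trace (A ^ m) = 0)
    (q : Polynomial ℝ) (hq : q.natDegree < D) (hpar : ∀ j, j % 2 = 0 → q.coeff j = 0) :
    Matrix.trace (Polynomial.aeval A q) = 0 := by
  rw [Polynomial.aeval_eq_sum_range' hq, Matrix.trace_sum]
  refine Finset.sum_eq_zero fun i hi => ?_
  rw [Finset.mem_range] at hi
  rw [Matrix.trace_smul]
  rcases Nat.even_or_odd i with he | ho
  · rw [hpar i (Nat.even_iff.1 he), zero_smul]
  · rw [hdiag i (Nat.odd_iff.1 ho) hi, smul_zero]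

end AuxPoly

/-- Let `Γ` be a connected `k`-regular graph with `d+1` distinct
eigenvalues whose predistance polynomials `p₀, …, p_d` (the orthogonal system for
`⟨p,q⟩ = (1/n) tr(p(A)q(A))` with `⟨pᵢ,pᵢ⟩ = pᵢ(k) ≠ 0`, `p₀ = 1`, `p₁ = x`)
satisfy the three-term recurrence `x pᵢ = β_{i-1} p_{i-1} + αᵢ pᵢ + γ_{i+1} p_{i+1}`.
If `Γ` has odd-girth at least `2d+1`, then `αᵢ = 0` for all `i < d`, and each `pᵢ`
(for `i ≤ d`) is even when `i` is even and odd when `i` is odd. -/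
theorem stmt_9 {V : Type*} [Fintype V] [DecidableEq V] (G : SimpleGraph V)
    [DecidableRel G.Adj] (k d : ℕ)
    (hconn : G.Connected) (hreg : G.IsRegularOfDegree k)
    (heig : (spectrum ℝ (G.adjMatrix ℝ)).ncard = d + 1)
    (hog : ∀ (u : V) (w : G.Walk u u), w.IsCycle → Odd w.length → 2 * d + 1 ≤ w.length)
    (p : ℕ → Polynomial ℝ) (α β γ : ℕ → ℝ)
    (hdeg : ∀ i ≤ d, (p i).natDegree = i)
    (hp0 : p 0 = 1) (hp1 : p 1 = Polynomial.X)
    (horth : ∀ i ≤ d, ∀ j ≤ d, i ≠ j →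
      Matrix.trace (Polynomial.aeval (G.adjMatrix ℝ) (p i) *
        Polynomial.aeval (G.adjMatrix ℝ) (p j)) = 0)
    (hnorm : ∀ i ≤ d,
      (1 / (Fintype.card V : ℝ)) *
          Matrix.trace (Polynomial.aeval (G.adjMatrix ℝ) (p i) *
            Polynomial.aeval (G.adjMatrix ℝ) (p i)) = (p i).eval (k : ℝ) ∧
        (p i).eval (k : ℝ) ≠ 0)
    (hrec0 : 0 < d →
      Polynomial.X * p 0 = Polynomial.C (α 0) * p 0 + Polynomial.C (γ 1) * p 1)
    (hrec : ∀ i, 1 ≤ i → i < d →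
      Polynomial.X * p i = Polynomial.C (β (i - 1)) * p (i - 1) +
        Polynomial.C (α i) * p i + Polynomial.C (γ (i + 1)) * p (i + 1))
    (hrecd : 0 < d →
      (G.adjMatrix ℝ) * Polynomial.aeval (G.adjMatrix ℝ) (p d)
        = β (d - 1) • Polynomial.aeval (G.adjMatrix ℝ) (p (d - 1)) +
            α d • Polynomial.aeval (G.adjMatrix ℝ) (p d)) :
    (∀ i < d, α i = 0) ∧
      (∀ i ≤ d, (Even i → ∀ j, Odd j → (p i).coeff j = 0) ∧
        (Odd i → ∀ j, Even j → (p i).coeff j = 0)) := by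
  classical
  -- no odd closed walks of length < 2d
  have hnoodd : ∀ m, m % 2 = 1 → m < 2 * d → ∀ u : V, ((G.adjMatrix ℝ) ^ m) u u = 0 := by
    intro m hm hmd u
    rw [SimpleGraph.adjMatrix_pow_apply_eq_card_walk]
    rw [show ((Fintype.card {p : G.Walk u u | p.length = m} : ℝ) = 0) ↔ _ from Nat.cast_eq_zero]
    rw [Fintype.card_eq_zero_iff]
    constructor
    rintro ⟨w, hw⟩
    simp only [Set.mem_setOf_eq] at hw
    obtain ⟨x, c, hc, hco, hcle⟩ := exists_odd_cycle m u w hw (Nat.odd_iff.2 hm)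
    have := hog x c hc hco
    omega
  have htr : ∀ m, m % 2 = 1 → m < 2 * d → Matrix.trace ((G.adjMatrix ℝ) ^ m) = 0 := by
    intro m hm hmd
    rw [Matrix.trace]
    exact Finset.sum_eq_zero fun u _ => hnoodd m hm hmd u
  have hV : Nonempty V := hconn.nonempty
  have hn : (Fintype.card V : ℝ) ≠ 0 := Nat.cast_ne_zero.2 Fintype.card_ne_zero
  have hpne : ∀ i, i ≤ d → p i ≠ 0 := fun i hi h0 => (hnorm i hi).2 (by simp [h0])
  have htrsq : ∀ i, i ≤ d →
      Matrix.trace (Polynomial.aeval (G.adjMatrix ℝ) (p i) *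
        Polynomial.aeval (G.adjMatrix ℝ) (p i))
      = (Fintype.card V : ℝ) * (p i).eval (k : ℝ) := by
    intro i hi
    have h1 := (hnorm i hi).1
    calc Matrix.trace (Polynomial.aeval (G.adjMatrix ℝ) (p i) *
          Polynomial.aeval (G.adjMatrix ℝ) (p i))
        = (Fintype.card V : ℝ) * ((1 / (Fintype.card V : ℝ)) *
            Matrix.trace (Polynomial.aeval (G.adjMatrix ℝ) (p i) *
              Polynomial.aeval (G.adjMatrix ℝ) (p i))) := by
          field_simp
      _ = (Fintype.card V : ℝ) * (p i).eval (k : ℝ) := by rw [h1]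
  -- α i = 0 for 1 ≤ i < d given parity of p i
  have hαstep : ∀ i, 1 ≤ i → i < d → ParP i (p i) → α i = 0 := by
    intro i h1 h2 hpar
    have e := hrec i h1 h2
    have e' : Polynomial.X * p i * p i
        = β (i-1) • (p (i-1) * p i)
          + (α i • (p i * p i) + γ (i+1) • (p (i+1) * p i)) := by
      rw [Polynomial.smul_eq_C_mul, Polynomial.smul_eq_C_mul, Polynomial.smul_eq_C_mul, e]
      ring
    have etr := congrArg (fun f => Matrix.trace (Polynomial.aeval (G.adjMatrix ℝ) f)) e'
    simp only [map_add, _root_.map_smul, _root_.map_mul, Matrix.trace_add,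
      Matrix.trace_smul, smul_eq_mul] at etr
    have hL : Matrix.trace (Polynomial.aeval (G.adjMatrix ℝ)
        (Polynomial.X * p i * p i)) = 0 := by
      apply tr_odd_poly _ (2*d) htr
      · calc (Polynomial.X * p i * p i).natDegree
            ≤ (Polynomial.X * p i).natDegree + (p i).natDegree := Polynomial.natDegree_mul_le
          _ ≤ ((Polynomial.X : Polynomial ℝ).natDegree + (p i).natDegree) + (p i).natDegree :=
              Nat.add_le_add_right Polynomial.natDegree_mul_le _
          _ = 1 + i + i := by rw [Polynomial.natDegree_X, hdeg i (le_of_lt h2)]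
          _ < 2 * d := by omega
      · intro j hj
        exact parP_mul (parP_mul parP_X hpar) hpar j (by omega)
    rw [_root_.map_mul, _root_.map_mul] at hL
    rw [hL] at etr
    rw [horth (i-1) (by omega) i (le_of_lt h2) (by omega),
      horth (i+1) (by omega) i (le_of_lt h2) (by omega),
      htrsq i (le_of_lt h2)] at etr
    have hne : (Fintype.card V : ℝ) * (p i).eval (k : ℝ) ≠ 0 :=
      mul_ne_zero hn (hnorm i (le_of_lt h2)).2
    simp only [mul_zero, add_zero, zero_add] at etr
    rcases mul_eq_zero.1 etr.symm with h | h
    · exact h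
    · exact absurd h hne
  -- parity step
  have hstep : ∀ i, 1 ≤ i → i < d → ParP (i-1) (p (i-1)) → ParP i (p i) → α i = 0 →
      ParP (i+1) (p (i+1)) := by
    intro i h1 h2 hparm hpar hα
    have e := hrec i h1 h2
    have hγ : γ (i+1) ≠ 0 := by
      have hz1 : (p (i-1)).coeff (i+1) = 0 :=
        Polynomial.coeff_eq_zero_of_natDegree_lt (by rw [hdeg (i-1) (by omega)]; omega)
      have hz2 : (p i).coeff (i+1) = 0 :=
        Polynomial.coeff_eq_zero_of_natDegree_lt (by rw [hdeg i (by omega)]; omega)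
      have hne : (p i).coeff i ≠ 0 := by
        have h3 := Polynomial.leadingCoeff_ne_zero.2 (hpne i (le_of_lt h2))
        rwa [Polynomial.leadingCoeff, hdeg i (le_of_lt h2)] at h3
      have hco := congrArg (fun f => Polynomial.coeff f (i+1)) e
      simp only [Polynomial.coeff_add, Polynomial.coeff_C_mul, Polynomial.coeff_X_mul,
        hz1, hz2, mul_zero, add_zero, zero_add] at hco
      intro h0
      rw [h0, zero_mul] at hco
      exact hne hco
    intro j hj
    have hco := congrArg (fun f => Polynomial.coeff f j) e
    simp only [Polynomial.coeff_add, Polynomial.coeff_C_mul] at hco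
    have hXp : (Polynomial.X * p i).coeff j = 0 := parP_mul parP_X hpar j (by omega)
    rw [hXp, hparm j (by omega), hα] at hco
    simp only [mul_zero, zero_mul, zero_add, add_zero] at hco
    rcases mul_eq_zero.1 hco.symm with h | h
    · exact absurd h hγ
    · exact h
  -- main parity induction
  have hPar : ∀ i, i ≤ d → ParP i (p i) := by
    intro i
    induction i using Nat.strong_induction_on with
    | _ i IH =>
      rcases i with _ | i
      · intro _; rw [hp0]; exact parP_one
      rcases i with _ | m
      · intro _; rw [hp1]; exact parP_X
      · intro hle
        have h1 : 1 ≤ m + 1 := by omega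
        have h2 : m + 1 < d := by omega
        have hpm1 := IH (m+1) (by omega) (by omega)
        have hpm := IH m (by omega) (by omega)
        have hα := hαstep (m+1) h1 h2 hpm1
        have hres := hstep (m+1) h1 h2 (by simpa using hpm) hpm1 hα
        simpa using hres
  have hα0 : 0 < d → α 0 = 0 := by
    intro hd
    have hco := congrArg (fun f => Polynomial.coeff f 0) (hrec0 hd)
    simp [hp0, hp1] at hco
    exact hco.symm
  refine ⟨?_, ?_⟩
  · intro i hi
    rcases Nat.eq_zero_or_pos i with rfl | hpos
    · exact hα0 hi
    · exact hαstep i hpos hi (hPar i (le_of_lt hi))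
  · intro i hi
    refine ⟨fun hev j hodd => hPar i hi j ?_, fun hod j hev => hPar i hi j ?_⟩
    · rw [Nat.even_iff] at hev; rw [Nat.odd_iff] at hodd; omega
    · rw [Nat.odd_iff] at hod; rw [Nat.even_iff] at hev; omega
end

section
/- Let Γ be a connected graph with odd-girth five whose adjacency matrix has exactly three distinct eigenvalues λ_0 > λ_1 > λ_2. Then Γ is regular. -/
open SimpleGraph Matrix

private theorem my_no_walk3 {V : Type*} [Fintype V] [DecidableEq V] (G : SimpleGraph V)
    [DecidableRel G.Adj]
    (hog : ∀ (u : V) (w : G.Walk u u), w.IsCycle → Odd w.length → 5 ≤ w.length)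
    (u : V) (p : G.Walk u u) (hp : p.length = 3) : False := by
  cases p with
  | nil => simp at hp
  | cons h q =>
    cases q with
    | nil => simp at hp
    | cons h' q' =>
      cases q' with
      | nil => simp at hp
      | cons h'' q'' =>
        simp [Walk.length_cons] at hp
        have hp : q''.length = 0 := by simpa using hp
        have := (SimpleGraph.Walk.eq_of_length_eq_zero hp)
        subst this
        have hq : q'' = Walk.nil := Walk.nil_iff_eq_nil.mp ((SimpleGraph.Walk.length_eq_zero_iff).mp hp)
        subst hq
        have hcyc : (Walk.cons h (Walk.cons h' (Walk.cons h'' Walk.nil))).IsCycle := by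
          simp [Walk.isCycle_def, Walk.isTrail_def, Sym2.eq_iff, h.ne, h'.ne, h''.ne,
            h.ne', h'.ne', h''.ne']
        have := hog _ _ hcyc (by simp [Walk.length_cons]; decide)
        simp [Walk.length_cons] at this

private theorem my_poly_zero {V : Type*} [Fintype V] [DecidableEq V] (A : Matrix V V ℝ)
    (hA : A.IsHermitian) (lam0 lam1 lam2 : ℝ)
    (hspec : spectrum ℝ A = {lam0, lam1, lam2}) :
    (A - lam0 • 1) * (A - lam1 • 1) * (A - lam2 • 1) = 0 := by
  set U : Matrix V V ℝ := (hA.eigenvectorUnitary : Matrix V V ℝ) with hU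
  set D : Matrix V V ℝ := diagonal (RCLike.ofReal ∘ hA.eigenvalues) with hD
  have hUU : U * star U = 1 := (Matrix.mem_unitaryGroup_iff).mp hA.eigenvectorUnitary.2
  have hstarU : star U * U = 1 := (Matrix.mem_unitaryGroup_iff').mp hA.eigenvectorUnitary.2
  have hsp : A = U * D * star U := hA.spectral_theorem
  have key : ∀ c : ℝ, A - c • 1 = U * (D - c • 1) * star U := by
    intro c
    rw [Matrix.mul_sub, Matrix.sub_mul, ← hsp]
    congr 1
    simp [Matrix.mul_smul, Matrix.smul_mul, hUU]
  have hdiag : ∀ c : ℝ, D - c • (1 : Matrix V V ℝ) = diagonal (fun i => hA.eigenvalues i - c) := by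
    intro c
    ext i j
    rcases eq_or_ne i j with rfl | h
    · simp [hD]
    · simp [hD, h, Matrix.one_apply_ne h]
  have hfun : (fun i => (hA.eigenvalues i - lam0) * (hA.eigenvalues i - lam1) *
      (hA.eigenvalues i - lam2)) = fun _ : V => (0 : ℝ) := by
    funext i
    have hmem : hA.eigenvalues i ∈ spectrum ℝ A := hA.eigenvalues_mem_spectrum_real i
    rw [hspec] at hmem
    rcases hmem with h | h | h
    · rw [h]; ring
    · rw [h]; ring
    · rw [Set.mem_singleton_iff] at h; rw [h]; ring
  have hzero : (D - lam0 • 1) * (D - lam1 • 1) * (D - lam2 • 1) = 0 := by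
    rw [hdiag, hdiag, hdiag, Matrix.diagonal_mul_diagonal, Matrix.diagonal_mul_diagonal]
    rw [show (fun i => (hA.eigenvalues i - lam0) * (hA.eigenvalues i - lam1) *
        (hA.eigenvalues i - lam2)) = fun _ : V => (0 : ℝ) from hfun]
    simp
  have h1 : ∀ X Y : Matrix V V ℝ, (U * X * star U) * (U * Y * star U) = U * (X * Y) * star U := by
    intro X Y
    have e : U * X * star U * (U * Y * star U) = U * X * ((star U * U) * (Y * star U)) := by
      simp only [Matrix.mul_assoc]
    rw [e, hstarU, Matrix.one_mul]
    simp only [Matrix.mul_assoc]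
  rw [key lam0, key lam1, key lam2, h1, h1, hzero]
  simp

private theorem my_expand {V : Type*} [Fintype V] [DecidableEq V] (A : Matrix V V ℝ) (a b c : ℝ) :
    (A - a • 1) * (A - b • 1) * (A - c • 1)
      = A ^ 3 - (a + b + c) • A ^ 2 + (a * b + a * c + b * c) • A - (a * b * c) • 1 := by
  simp only [sub_mul, mul_sub, Matrix.smul_mul, Matrix.mul_smul, smul_smul, one_mul,
    Matrix.mul_one, pow_succ, pow_zero, Matrix.one_mul, smul_sub, add_smul, sub_smul]
  module

/-- A connected graph with odd-girth five (it has a 5-cycle and no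
shorter odd cycle) whose adjacency matrix has exactly three distinct eigenvalues
`λ₀ > λ₁ > λ₂` is regular. -/
theorem stmt_14 {V : Type*} [Fintype V] [DecidableEq V] (G : SimpleGraph V)
    [DecidableRel G.Adj] (lam0 lam1 lam2 : ℝ)
    (hconn : G.Connected)
    (h5 : ∃ (u : V) (w : G.Walk u u), w.IsCycle ∧ w.length = 5)
    (hog : ∀ (u : V) (w : G.Walk u u), w.IsCycle → Odd w.length → 5 ≤ w.length)
    (h01 : lam0 > lam1) (h12 : lam1 > lam2)
    (hspec : spectrum ℝ (G.adjMatrix ℝ) = {lam0, lam1, lam2}) :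
    ∃ k : ℕ, G.IsRegularOfDegree k := by
  set A : Matrix V V ℝ := G.adjMatrix ℝ with hA_def
  have hA : A.IsHermitian := by
    ext i j
    simp [hA_def, Matrix.conjTranspose_apply, SimpleGraph.adj_comm]
  set s : ℝ := lam0 + lam1 + lam2 with hs_def
  set q : ℝ := lam0 * lam1 + lam0 * lam2 + lam1 * lam2 with hq_def
  set r : ℝ := lam0 * lam1 * lam2 with hr_def
  have hexp : A ^ 3 - s • A ^ 2 + q • A - r • 1 = 0 := by
    rw [← my_expand A lam0 lam1 lam2]
    exact my_poly_zero A hA lam0 lam1 lam2 hspec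
  -- diagonal entry equations
  have hA3 : ∀ u : V, (A ^ 3) u u = 0 := by
    intro u
    rw [hA_def, SimpleGraph.adjMatrix_pow_apply_eq_card_walk]
    rw [Nat.cast_eq_zero, Fintype.card_eq_zero_iff]
    exact ⟨fun ⟨p, hp⟩ => (my_no_walk3 G hog u p hp).elim⟩
  have hA2 : ∀ u : V, (A ^ 2) u u = (G.degree u : ℝ) := by
    intro u
    rw [pow_two, hA_def, SimpleGraph.adjMatrix_mul_self_apply_self]
  have hA1 : ∀ u : V, A u u = 0 := by intro u; simp [hA_def]
  have heq : ∀ u : V, s * (G.degree u : ℝ) + r = 0 := by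
    intro u
    have := congrFun (congrFun hexp u) u
    simp only [Matrix.sub_apply, Matrix.add_apply, Matrix.smul_apply, Matrix.one_apply_eq,
      Matrix.zero_apply, smul_eq_mul] at this
    rw [hA3 u, hA2 u, hA1 u] at this
    linarith
  obtain ⟨u0, w, hw, hwlen⟩ := h5
  by_cases hs : s = 0
  · -- then r = 0, and A^3 = (-q) • A, giving (A^5) u0 u0 = 0, contradicting the 5-cycle
    exfalso
    have hr0 : r = 0 := by have := heq u0; rw [hs] at this; linarith
    have h3 : A ^ 3 = (-q) • A := by
      have h := hexp
      rw [hs, hr0] at h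
      simp only [zero_smul, sub_zero] at h
      linear_combination (norm := module) h
    have h5p : A ^ 5 = (q ^ 2) • A := by
      have e : A ^ 5 = A ^ 2 * A ^ 3 := by rw [← pow_add]
      have e2 : A ^ 2 * A = A ^ 3 := by rw [← pow_succ]
      rw [e, h3, Matrix.mul_smul, e2, h3, smul_smul]
      module
    have hzero5 : (A ^ 5) u0 u0 = 0 := by
      rw [h5p]
      simp [Matrix.smul_apply, hA1 u0]
    have hpos : 0 < Fintype.card {p : G.Walk u0 u0 | p.length = 5} := by
      rw [Fintype.card_pos_iff]
      exact ⟨⟨w, hwlen⟩⟩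
    rw [hA_def, SimpleGraph.adjMatrix_pow_apply_eq_card_walk] at hzero5
    have : (0:ℝ) < Fintype.card {p : G.Walk u0 u0 | p.length = 5} := by exact_mod_cast hpos
    linarith
  · -- degrees are all equal to -r/s
    refine ⟨G.degree u0, fun u => ?_⟩
    have h1 := heq u
    have h2 := heq u0
    have : (G.degree u : ℝ) = (G.degree u0 : ℝ) := by
      have hm : s * (G.degree u : ℝ) = s * (G.degree u0 : ℝ) := by linarith
      exact mul_left_cancel₀ hs hm
    exact_mod_cast this
end

section
/- Let A be the adjacency matrix of a triangle-free graph with distinct eigenvalues λ_0 > λ_1 > λ_2 (exactly three). Then for every vertex u, (λ_0 + λ_1 + λ_2) · deg(u) = −λ_0 λ_1 λ_2. -/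
open SimpleGraph Matrix

/-- In a triangle-free graph there is no closed walk of length 3. -/
lemma no_walk_three {V : Type*} [DecidableEq V] {G : SimpleGraph V} (htf : G.CliqueFree 3) (u : V) :
    IsEmpty { p : G.Walk u u | p.length = 3 } := by
  constructor
  rintro ⟨p, hp⟩
  simp only [Set.mem_setOf_eq] at hp
  cases p with
  | nil => simp at hp
  | cons h1 q =>
    cases q with
    | nil => simp at hp
    | cons h2 r =>
      cases r with
      | nil => simp at hp
      | cons h3 s =>
        cases s with
        | nil =>
          exact htf _ (is3Clique_triple_iff.2 ⟨h1, h3.symm, h2⟩)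
        | cons h4 t => simp [SimpleGraph.Walk.length_cons] at hp

/-- If the adjacency matrix of a triangle-free graph has exactly three
distinct eigenvalues `λ₀ > λ₁ > λ₂`, then for every vertex `u`,
`(λ₀ + λ₁ + λ₂) · deg(u) = −λ₀λ₁λ₂`. -/
theorem stmt_15 {V : Type*} [Fintype V] [DecidableEq V] (G : SimpleGraph V)
    [DecidableRel G.Adj] (lam0 lam1 lam2 : ℝ)
    (htf : G.CliqueFree 3)
    (h01 : lam0 > lam1) (h12 : lam1 > lam2)
    (hspec : spectrum ℝ (G.adjMatrix ℝ) = {lam0, lam1, lam2}) :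
    ∀ u : V, (lam0 + lam1 + lam2) * (G.degree u : ℝ) = -(lam0 * lam1 * lam2) := by
  intro u
  set A : Matrix V V ℝ := G.adjMatrix ℝ with hA_def
  have hA : A.IsHermitian := by
    rw [Matrix.IsHermitian, conjTranspose_eq_transpose_of_trivial]
    exact G.isSymm_adjMatrix
  set U : Matrix V V ℝ := (hA.eigenvectorUnitary : Matrix V V ℝ) with hU_def
  have hUU : U * star U = 1 := (Matrix.mem_unitaryGroup_iff).mp hA.eigenvectorUnitary.2
  have hUU' : star U * U = 1 := (Matrix.mem_unitaryGroup_iff').mp hA.eigenvectorUnitary.2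
  -- eigenvalues lie in {lam0, lam1, lam2}
  have hmem : ∀ i : V, hA.eigenvalues i = lam0 ∨ hA.eigenvalues i = lam1 ∨
      hA.eigenvalues i = lam2 := by
    intro i
    have := hA.eigenvalues_mem_spectrum_real (𝕜 := ℝ) i
    rw [hspec] at this
    simpa using this
  -- the annihilating product of diagonal matrices is zero
  have hdiagzero :
      (Matrix.diagonal (fun i => hA.eigenvalues i - lam0)) *
      (Matrix.diagonal (fun i => hA.eigenvalues i - lam1)) *
      (Matrix.diagonal (fun i => hA.eigenvalues i - lam2)) = 0 := by
    rw [Matrix.diagonal_mul_diagonal, Matrix.diagonal_mul_diagonal]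
    have : (fun i => (hA.eigenvalues i - lam0) * (hA.eigenvalues i - lam1) *
        (hA.eigenvalues i - lam2)) = fun _ => (0 : ℝ) := by
      funext i
      rcases hmem i with h | h | h <;> rw [h] <;> ring
    rw [this, Matrix.diagonal_zero]
  -- A - lam • 1 = U * (D - lam • 1) * star U
  have hfact : ∀ lam : ℝ, A - lam • 1 =
      U * (Matrix.diagonal (fun i => hA.eigenvalues i - lam)) * star U := by
    intro lam
    have hD : Matrix.diagonal (fun i => hA.eigenvalues i - lam) =
        Matrix.diagonal (RCLike.ofReal ∘ hA.eigenvalues) - lam • 1 := by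
      rw [Matrix.smul_one_eq_diagonal]
      rw [← Matrix.diagonal_sub]
      rfl
    rw [hD, Matrix.mul_sub, Matrix.sub_mul, Matrix.mul_smul, mul_one, Matrix.smul_mul, hUU,
      hU_def, ← Unitary.conjStarAlgAut_apply (S := ℝ), ← hA.spectral_theorem]
  -- minimal polynomial annihilates A
  have hP : (A - lam0 • 1) * (A - lam1 • 1) * (A - lam2 • 1) = 0 := by
    rw [hfact lam0, hfact lam1, hfact lam2]
    calc U * Matrix.diagonal (fun i => hA.eigenvalues i - lam0) * star U *
          (U * Matrix.diagonal (fun i => hA.eigenvalues i - lam1) * star U) *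
          (U * Matrix.diagonal (fun i => hA.eigenvalues i - lam2) * star U)
        = U * (Matrix.diagonal (fun i => hA.eigenvalues i - lam0) *
            Matrix.diagonal (fun i => hA.eigenvalues i - lam1) *
            Matrix.diagonal (fun i => hA.eigenvalues i - lam2)) * star U := by
          simp only [Matrix.mul_assoc]
          rw [← Matrix.mul_assoc (star U) U, hUU', Matrix.one_mul,
            ← Matrix.mul_assoc (star U) U, hUU', Matrix.one_mul]
      _ = 0 := by rw [hdiagzero, Matrix.mul_zero, Matrix.zero_mul]
  -- expand the product
  have hexpand : (A - lam0 • 1) * (A - lam1 • 1) * (A - lam2 • 1) =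
      A * A * A - (lam0 + lam1 + lam2) • (A * A)
        + (lam0 * lam1 + lam0 * lam2 + lam1 * lam2) • A - (lam0 * lam1 * lam2) • 1 := by
    simp only [Matrix.mul_sub, Matrix.sub_mul, Matrix.smul_mul, Matrix.mul_smul,
      Matrix.one_mul, Matrix.mul_one, smul_smul, smul_sub, sub_smul, add_smul]
    abel_nf
    ring_nf
    abel
  rw [hexpand] at hP
  -- evaluate the (u,u) entry
  have hPuu := congrFun (congrFun hP u) u
  have hA3 : (A * A * A) u u = 0 := by
    have h3 : A * A * A = A ^ 3 := by rw [pow_succ, pow_two]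
    rw [h3, adjMatrix_pow_apply_eq_card_walk]
    norm_cast
    exact Fintype.card_eq_zero_iff.mpr (no_walk_three htf u)
  have hA2 : (A * A) u u = (G.degree u : ℝ) := G.adjMatrix_mul_self_apply_self u
  have hA1 : A u u = 0 := by simp [hA_def]
  simp only [Matrix.sub_apply, Matrix.add_apply, Matrix.smul_apply, Matrix.zero_apply,
    Matrix.one_apply_eq, hA3, hA2, hA1, smul_eq_mul, mul_zero, mul_one] at hPuu
  linarith
end

section
/- Let Γ be a connected triangle-free graph with an odd cycle whose Laplacian matrix has three distinct eigenvalues. Then Γ is regular. -/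
open SimpleGraph Matrix

section aux
variable {n : Type*} [Fintype n] [DecidableEq n]

lemma ann_aux (A : Matrix n n ℝ) (hA : A.IsHermitian) (μ ν : ℝ)
    (h : ∀ i, hA.eigenvalues i * (hA.eigenvalues i - μ) * (hA.eigenvalues i - ν) = 0) :
    A * (A * A - (μ + ν) • A + (μ * ν) • 1) = 0 := by
  set U : Matrix n n ℝ := (hA.eigenvectorUnitary : Matrix n n ℝ) with hUdef
  have hU1 : star U * U = 1 := by
    simpa [hUdef] using congrArg (Subtype.val) (unitary.star_mul_self hA.eigenvectorUnitary)
  have hU2 : U * star U = 1 := by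
    simpa [hUdef] using congrArg (Subtype.val) (unitary.mul_star_self hA.eigenvectorUnitary)
  set D : Matrix n n ℝ := diagonal hA.eigenvalues with hD
  set q : Matrix n n ℝ → Matrix n n ℝ := fun M => star U * M * U with hq
  have hqA : q A = D := by
    have hco : (RCLike.ofReal ∘ hA.eigenvalues : n → ℝ) = hA.eigenvalues :=
      funext fun i => by simp
    simp only [hq]
    rw [hUdef, ← Unitary.conjStarAlgAut_star_apply (S := ℝ), hA.conjStarAlgAut_star_eigenvectorUnitary, hco, hD]
  have hqmul : ∀ M N, q (M * N) = q M * q N := by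
    intro M N
    simp only [hq, Matrix.mul_assoc]
    rw [← Matrix.mul_assoc U (star U), hU2, Matrix.one_mul]
  have hqone : q 1 = 1 := by simp only [hq, Matrix.mul_one, hU1]
  have hqadd : ∀ M N, q (M + N) = q M + q N := by
    intro M N; simp only [hq, Matrix.mul_add, Matrix.add_mul]
  have hqsub : ∀ M N, q (M - N) = q M - q N := by
    intro M N; simp only [hq, Matrix.mul_sub, Matrix.sub_mul]
  have hqsmul : ∀ (c : ℝ) M, q (c • M) = c • q M := by
    intro c M; simp only [hq, Matrix.mul_smul, Matrix.smul_mul]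
  have hback : ∀ M, U * q M * star U = M := by
    intro M
    simp only [hq]
    rw [← Matrix.mul_assoc, ← Matrix.mul_assoc, hU2, Matrix.one_mul, Matrix.mul_assoc, hU2,
      Matrix.mul_one]
  have hqN : q (A * A - (μ + ν) • A + (μ * ν) • 1)
      = D * D - (μ + ν) • D + (μ * ν) • 1 := by
    rw [hqadd, hqsub, hqsmul, hqsmul, hqmul, hqA, hqone]
  have key : D * (D * D - (μ + ν) • D + (μ * ν) • 1) = 0 := by
    have h1 : D * D - (μ + ν) • D + (μ * ν) • (1 : Matrix n n ℝ)
        = diagonal (fun i => hA.eigenvalues i * hA.eigenvalues i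
            - (μ + ν) * hA.eigenvalues i + μ * ν) := by
      rw [hD, diagonal_mul_diagonal, ← diagonal_smul, ← diagonal_one (n := n) (α := ℝ),
        ← diagonal_smul, diagonal_sub, diagonal_add]
      congr 1
      funext i
      simp
    rw [h1, hD, diagonal_mul_diagonal]
    ext i j
    rcases eq_or_ne i j with rfl | hij
    · simp only [diagonal_apply_eq, Matrix.zero_apply]
      nlinarith [h i]
    · simp [diagonal_apply_ne _ hij]
  have hz : q (A * (A * A - (μ + ν) • A + (μ * ν) • 1)) = 0 := by
    rw [hqmul, hqA, hqN, key]
  calc A * (A * A - (μ + ν) • A + (μ * ν) • 1)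
      = U * q (A * (A * A - (μ + ν) • A + (μ * ν) • 1)) * star U := (hback _).symm
    _ = 0 := by rw [hz, Matrix.mul_zero, Matrix.zero_mul]

end aux

/-- A connected triangle-free graph containing an odd cycle whose
Laplacian matrix has exactly three distinct eigenvalues is regular. -/
theorem stmt_16 {V : Type*} [Fintype V] [DecidableEq V] (G : SimpleGraph V)
    [DecidableRel G.Adj]
    (hconn : G.Connected) (htf : G.CliqueFree 3)
    (hoddcycle : ∃ (u : V) (w : G.Walk u u), w.IsCycle ∧ Odd w.length)
    (hL : (spectrum ℝ (G.lapMatrix ℝ)).ncard = 3) :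
    ∃ k : ℕ, G.IsRegularOfDegree k := by
  classical
  have hV : Nonempty V := hconn.nonempty
  set L : Matrix V V ℝ := G.lapMatrix ℝ with hLdef
  have hH : L.IsHermitian := (posSemidef_lapMatrix ℝ G).isHermitian
  -- 0 is an eigenvalue
  have h0 : (0 : ℝ) ∈ spectrum ℝ L := by
    rw [spectrum.zero_mem_iff]
    intro hunit
    have hinj := (Matrix.mulVec_injective_iff_isUnit).mpr hunit
    have h1 : L *ᵥ (fun _ => (1 : ℝ)) = L *ᵥ (0 : V → ℝ) := by
      rw [Matrix.mulVec_zero, hLdef, G.lapMatrix_mulVec_const_eq_zero]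
    have := congrFun (hinj h1) (Classical.arbitrary V)
    simp at this
  -- get the two other eigenvalues
  obtain ⟨a, b, c, hab, hac, hbc, hs⟩ := Set.ncard_eq_three.mp hL
  have hroots : ∃ μ ν : ℝ, ∀ x ∈ spectrum ℝ L, x * (x - μ) * (x - ν) = 0 := by
    rw [hs] at h0
    simp only [Set.mem_insert_iff, Set.mem_singleton_iff] at h0
    rcases h0 with h0 | h0 | h0
    · refine ⟨b, c, fun x hx => ?_⟩
      rw [hs] at hx
      simp only [Set.mem_insert_iff, Set.mem_singleton_iff] at hx
      rcases hx with rfl | rfl | rfl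
      · rw [← h0]; ring
      · ring
      · ring
    · refine ⟨a, c, fun x hx => ?_⟩
      rw [hs] at hx
      simp only [Set.mem_insert_iff, Set.mem_singleton_iff] at hx
      rcases hx with rfl | rfl | rfl
      · ring
      · rw [← h0]; ring
      · ring
    · refine ⟨a, b, fun x hx => ?_⟩
      rw [hs] at hx
      simp only [Set.mem_insert_iff, Set.mem_singleton_iff] at hx
      rcases hx with rfl | rfl | rfl
      · ring
      · ring
      · rw [← h0]; ring
  obtain ⟨μ, ν, hμν⟩ := hroots
  set N : Matrix V V ℝ := L * L - (μ + ν) • L + (μ * ν) • 1 with hNdef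
  have hann : L * N = 0 := by
    apply ann_aux L hH μ ν
    intro i
    exact hμν _ (hH.eigenvalues_mem_spectrum_real i)
  -- columns of N are constant
  have hcol : ∀ j i i', N i j = N i' j := by
    intro j i i'
    have hker : Matrix.toLin' (G.lapMatrix ℝ) (fun i => N i j) = 0 := by
      rw [Matrix.toLin'_apply]
      funext i
      have := congrFun (congrFun hann i) j
      simpa [Matrix.mul_apply, Matrix.mulVec, dotProduct] using this
    exact (G.lapMatrix_mulVec_eq_zero_iff_forall_reachable).mp (by rwa [Matrix.toLin'_apply] at hker) i i' (hconn i i')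
  have hsymL : Lᵀ = L := G.isSymm_lapMatrix (R := ℝ)
  have hsymN : ∀ i j, N i j = N j i := by
    have hNs : Nᵀ = N := by
      rw [hNdef]
      simp [Matrix.transpose_add, Matrix.transpose_sub, Matrix.transpose_smul,
        Matrix.transpose_mul, Matrix.transpose_one, hsymL]
    intro i j
    conv_rhs => rw [← hNs]
    rfl
  have hconst : ∀ u v u' v' : V, N u v = N u' v' := by
    intro u v u' v'
    rw [hcol v u u', hsymN u' v, hcol u' v v', hsymN v' u']
  -- Laplacian entries
  have hLapp : ∀ i j : V, L i j =
      (if i = j then (G.degree i : ℝ) else 0) - (if G.Adj i j then 1 else 0) := by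
    intro i j
    rw [hLdef]
    simp [lapMatrix, degMatrix, Matrix.sub_apply, Matrix.diagonal_apply, adjMatrix_apply]
  -- entry of N at an edge
  have hNedge : ∀ u v : V, G.Adj u v → N u v = -((G.degree u : ℝ) + G.degree v) + (μ + ν) := by
    intro u v huv
    have hne : u ≠ v := huv.ne
    have hLL : (L * L) u v = -((G.degree u : ℝ) + G.degree v) := by
      rw [Matrix.mul_apply]
      have hzero : ∀ w ∈ Finset.univ, w ∉ ({u, v} : Finset V) → L u w * L w v = 0 := by
        intro w _ hw
        simp only [Finset.mem_insert, Finset.mem_singleton, not_or] at hw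
        obtain ⟨hwu, hwv⟩ := hw
        rw [hLapp, hLapp]
        rw [if_neg (Ne.symm hwu), if_neg hwv]
        by_cases h1 : G.Adj u w
        · by_cases h2 : G.Adj w v
          · exact absurd (is3Clique_triple_iff.mpr ⟨huv, h1, h2.symm⟩) (htf {u, v, w})
          · simp [h2]
        · simp [h1]
      rw [← Finset.sum_subset (Finset.subset_univ ({u, v} : Finset V)) hzero]
      rw [Finset.sum_pair hne]
      rw [hLapp u u, hLapp u v, hLapp v v]
      simp [hne, huv, huv.symm, G.loopless.irrefl u, G.loopless.irrefl v]
      ring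
    rw [hNdef]
    simp only [Matrix.add_apply, Matrix.sub_apply, Matrix.smul_apply, smul_eq_mul,
      Matrix.one_apply_ne hne]
    rw [hLL, hLapp u v, if_neg hne, if_pos huv]
    ring
  -- the degree sum is constant over edges
  have hedgesum : ∀ u v u' v' : V, G.Adj u v → G.Adj u' v' →
      G.degree u + G.degree v = G.degree u' + G.degree v' := by
    intro u v u' v' h h'
    have e1 := hNedge u v h
    have e2 := hNedge u' v' h'
    rw [hconst u v u' v'] at e1
    have : ((G.degree u : ℝ) + G.degree v) = ((G.degree u' : ℝ) + G.degree v') := by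
      linarith
    exact_mod_cast this
  -- get an edge from the odd cycle
  obtain ⟨u, w, hcyc, hodd⟩ := hoddcycle
  have hedge : ∃ a₀ b₀ : V, G.Adj a₀ b₀ := by
    cases w with
    | nil => simp at hodd
    | cons h p => exact ⟨_, _, h⟩
  obtain ⟨a₀, b₀, hab₀⟩ := hedge
  set C : ℕ := G.degree a₀ + G.degree b₀ with hC
  have hsum : ∀ x y : V, G.Adj x y → G.degree x + G.degree y = C :=
    fun x y h => hedgesum x y a₀ b₀ h hab₀
  -- parity along walks
  have par : ∀ (x y : V) (p : G.Walk x y),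
      (Even p.length → G.degree x = G.degree y) ∧
      (Odd p.length → G.degree x + G.degree y = C) := by
    intro x y p
    induction p with
    | nil =>
      refine ⟨fun _ => rfl, fun h => absurd h (by simp)⟩
    | @cons x z y h p ih =>
      constructor
      · intro he
        rw [SimpleGraph.Walk.length_cons, Nat.even_add_one] at he
        have hop : Odd p.length := Nat.not_even_iff_odd.symm.mpr he
        have h1 := ih.2 hop
        have h2 := hsum x z h
        omega
      · intro ho
        rw [SimpleGraph.Walk.length_cons, Nat.odd_add_one] at ho
        have h1 := ih.1 (Nat.not_odd_iff_even.mp ho)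
        have h2 := hsum x z h
        omega
  have h2u : G.degree u + G.degree u = C := (par u u w).2 hodd
  refine ⟨G.degree u, fun v => ?_⟩
  obtain ⟨p⟩ := hconn u v
  rcases Nat.even_or_odd p.length with he | ho
  · exact ((par u v p).1 he).symm
  · have := (par u v p).2 ho
    omega
end

section
/- Let Γ be a connected regular graph with d+1 distinct adjacency eigenvalues and finite odd-girth at least 2d+1. Then Γ has diameter exactly d and odd-girth exactly 2d+1. -/
open SimpleGraph Matrix Polynomial Finset

private lemma stmt19ConjPow {n : Type*} [Fintype n] [DecidableEq n] (U B : Matrix n n ℝ)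
    (h1 : U * star U = 1) (h2 : star U * U = 1) (k : ℕ) :
    (U * B * star U) ^ k = U * B ^ k * star U := by
  induction k with
  | zero => simp [h1]
  | succ k ih =>
    have key : star U * (U * B * star U) = B * star U := by
      rw [← mul_assoc, ← mul_assoc, h2, one_mul]
    calc (U * B * star U) ^ (k+1) = (U * B ^ k * star U) * (U * B * star U) := by
          rw [pow_succ, ih]
      _ = U * B ^ k * (star U * (U * B * star U)) := by rw [mul_assoc]
      _ = U * B ^ (k+1) * star U := by rw [key, pow_succ, ← mul_assoc, mul_assoc U]

private lemma stmt19AevalConj {n : Type*} [Fintype n] [DecidableEq n] (U B : Matrix n n ℝ)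
    (h1 : U * star U = 1) (h2 : star U * U = 1) (p : ℝ[X]) :
    aeval (U * B * star U) p = U * aeval B p * star U := by
  rw [aeval_eq_sum_range, aeval_eq_sum_range, Finset.mul_sum, Finset.sum_mul]
  refine Finset.sum_congr rfl fun i _ => ?_
  rw [stmt19ConjPow U B h1 h2, mul_smul_comm, smul_mul_assoc]

private lemma stmt19AevalDiag {n : Type*} [Fintype n] [DecidableEq n] (v : n → ℝ) (p : ℝ[X]) :
    aeval (Matrix.diagonal v) p = Matrix.diagonal (fun i => p.eval (v i)) := by
  ext i j
  rw [aeval_eq_sum_range, Matrix.sum_apply]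
  by_cases hij : i = j
  · subst hij
    rw [Matrix.diagonal_apply_eq, eval_eq_sum_range]
    refine Finset.sum_congr rfl fun k _ => ?_
    rw [Matrix.smul_apply, diagonal_pow, Matrix.diagonal_apply_eq, smul_eq_mul, Pi.pow_apply]
  · rw [Matrix.diagonal_apply_ne _ hij]
    refine Finset.sum_eq_zero fun k _ => ?_
    rw [Matrix.smul_apply, diagonal_pow, Matrix.diagonal_apply_ne _ hij, smul_zero]

private lemma stmt19Annihilate {n : Type*} [Fintype n] [DecidableEq n] (A : Matrix n n ℝ)
    (hA : A.IsHermitian) (s : Finset ℝ) (hs : ∀ i, hA.eigenvalues i ∈ s) :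
    aeval A (∏ μ ∈ s, (X - C μ)) = 0 := by
  set U : Matrix n n ℝ := (hA.eigenvectorUnitary : Matrix n n ℝ) with hU
  have h1 : U * star U = 1 := (Matrix.mem_unitaryGroup_iff).mp hA.eigenvectorUnitary.2
  have h2 : star U * U = 1 := (Matrix.mem_unitaryGroup_iff').mp hA.eigenvectorUnitary.2
  have hspec : A = U * Matrix.diagonal hA.eigenvalues * star U := by
    have := hA.spectral_theorem
    rwa [RCLike.ofReal_real_eq_id, Function.id_comp] at this
  rw [hspec, stmt19AevalConj _ _ h1 h2, stmt19AevalDiag]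
  have : (fun i => Polynomial.eval (hA.eigenvalues i) (∏ μ ∈ s, (X - C μ))) = fun _ => 0 := by
    funext i
    rw [eval_prod]
    exact Finset.prod_eq_zero (hs i) (by simp)
  rw [this, Matrix.diagonal_zero, mul_zero, zero_mul]

private lemma stmt19DiamLe {V : Type*} [Fintype V] [DecidableEq V] (G : SimpleGraph V)
    [DecidableRel G.Adj] (d : ℕ) (hconn : G.Connected)
    (heig : (spectrum ℝ (G.adjMatrix ℝ)).ncard = d + 1) : G.diam ≤ d := by
  by_contra hlt
  push_neg at hlt
  have hne : Nonempty V := hconn.nonempty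
  obtain ⟨u, v, huv⟩ := G.exists_dist_eq_diam
  set A := G.adjMatrix ℝ with hAdef
  have hA : A.IsHermitian := by
    rw [Matrix.IsHermitian, conjTranspose_eq_transpose_of_trivial]
    exact G.isSymm_adjMatrix
  have hfin : (spectrum ℝ A).Finite := by
    by_contra h
    rw [Set.Infinite.ncard h] at heig
    exact (Nat.succ_ne_zero d) heig.symm
  set s : Finset ℝ := hfin.toFinset with hsdef
  have hcard : s.card = d + 1 := by
    rw [← Set.ncard_eq_toFinset_card _ hfin, heig]
  set q : ℝ[X] := ∏ μ ∈ s, (X - C μ) with hqdef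
  have hq_monic : q.Monic := monic_prod_of_monic _ _ fun μ _ => monic_X_sub_C μ
  have hq_deg : q.natDegree = d + 1 := by
    rw [hqdef, natDegree_prod _ _ fun μ _ => X_sub_C_ne_zero μ]
    simp [hcard]
  have hq0 : aeval A q = 0 :=
    stmt19Annihilate A hA s fun i => hfin.mem_toFinset.mpr (hA.eigenvalues_mem_spectrum_real i)
  set m := G.dist u v with hmdef
  have hm : d < m := huv ▸ hlt
  set r : ℝ[X] := X ^ m %ₘ q with hrdef
  have hr_deg : r.natDegree ≤ d := by
    have hq1 : q ≠ 1 := by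
      intro h
      rw [h, natDegree_one] at hq_deg
      exact (Nat.succ_ne_zero d) hq_deg.symm
    have h2 := natDegree_modByMonic_lt (X ^ m) hq_monic hq1
    rw [← hrdef, hq_deg] at h2
    omega
  have hAm : A ^ m = aeval A r := by
    conv_lhs => rw [← aeval_X_pow (R := ℝ) (x := A) (n := m),
      ← modByMonic_add_div (X ^ m) q]
    rw [map_add, _root_.map_mul, hq0, zero_mul, add_zero]
  have h1 : (A ^ m) u v ≠ 0 := by
    rw [hAdef, adjMatrix_pow_apply_eq_card_walk]
    obtain ⟨p, hp⟩ := hconn.exists_walk_length_eq_dist u v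
    have : 0 < Fintype.card { p : G.Walk u v | p.length = m } :=
      Fintype.card_pos_iff.mpr ⟨⟨p, hp⟩⟩
    exact_mod_cast this.ne'
  have h2 : (A ^ m) u v = 0 := by
    rw [hAm, aeval_eq_sum_range, Matrix.sum_apply]
    refine Finset.sum_eq_zero fun i hi => ?_
    rw [Matrix.smul_apply, hAdef, adjMatrix_pow_apply_eq_card_walk]
    have hemp : Fintype.card { p : G.Walk u v | p.length = i } = 0 := by
      rw [Fintype.card_eq_zero_iff]
      constructor
      rintro ⟨p, hp⟩
      have : m ≤ i := hp ▸ SimpleGraph.dist_le p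
      rw [Finset.mem_range] at hi
      omega
    rw [hemp, Nat.cast_zero, smul_zero]
  exact h1 h2


private lemma stmt19OddWalkCycle {V : Type*} [DecidableEq V] {G : SimpleGraph V} :
    ∀ (n : ℕ) {u : V} (w : G.Walk u u), w.length = n → Odd n →
      ∃ (x : V) (c : G.Walk x x), c.IsCycle ∧ Odd c.length ∧ c.length ≤ n := by
  intro n
  induction n using Nat.strong_induction_on with
  | _ n ih =>
    intro u w hlen hodd
    cases w with
    | nil => rw [← hlen] at hodd; simp [Nat.odd_iff] at hodd
    | @cons _ v _ hadj t =>
      by_cases hpath : t.IsPath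
      · by_cases hedge : s(u, v) ∈ t.edges
        · exfalso
          cases t with
          | nil => simp at hedge
          | @cons _ y _ hadj2 t2 =>
            rw [Walk.edges_cons, List.mem_cons] at hedge
            rcases hedge with he | he
            · have hy : y = u := by
                rw [Sym2.eq_iff] at he
                rcases he with ⟨h1, h2⟩ | ⟨h1, h2⟩
                · exact absurd h1 hadj.ne
                · exact h1.symm
              subst hy
              have h2 := (Walk.cons_isPath_iff hadj2 t2).mp hpath
              have ht2 : t2 = Walk.nil := Walk.isPath_iff_eq_nil.mp h2.1
              subst ht2
              rw [← hlen] at hodd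
              simp [Nat.odd_iff] at hodd
            · exact ((Walk.cons_isPath_iff hadj2 t2).mp hpath).2
                (Walk.snd_mem_support_of_mem_edges t2 he)
        · exact ⟨u, Walk.cons hadj t, (Walk.cons_isCycle_iff t hadj).mpr ⟨hpath, hedge⟩,
            hlen ▸ hodd, hlen.le⟩
      · rw [Walk.isPath_def] at hpath
        obtain ⟨x, hxdup⟩ := List.exists_duplicate_iff_not_nodup.mpr hpath
        have hxcount : 2 ≤ t.support.count x := List.duplicate_iff_two_le_count.mp hxdup
        have hxmem : x ∈ t.support := List.count_pos_iff.mp (by omega)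
        set t1 := t.takeUntil x hxmem with ht1
        set t2 := t.dropUntil x hxmem with ht2
        have hspec : t1.append t2 = t := t.take_spec hxmem
        have hc1 : t1.support.count x = 1 := t.count_support_takeUntil_eq_one hxmem
        have hxtail : x ∈ t2.support.tail := by
          have := hspec ▸ hxcount
          rw [Walk.support_append, List.count_append, hc1] at this
          exact List.count_pos_iff.mp (by omega)
        cases ht2' : t2 with
        | nil => rw [ht2'] at hxtail; simp at hxtail
        | @cons _ y _ h2 t3 =>
          have hx3 : x ∈ t3.support := by
            rw [ht2'] at hxtail; simpa using hxtail
          set t4 := t3.takeUntil x hx3 with ht4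
          set t5 := t3.dropUntil x hx3 with ht5
          have hspec3 : t4.append t5 = t3 := t3.take_spec hx3
          -- two closed walks
          set c : G.Walk x x := Walk.cons h2 t4 with hc
          set r : G.Walk u u := Walk.cons hadj (t1.append t5) with hr
          have hlen_t : t1.length + t2.length = t.length := by
            rw [← hspec, Walk.length_append]
          have hlen_t3 : t4.length + t5.length = t3.length := by
            rw [← hspec3, Walk.length_append]
          have hlen_t2 : t2.length = t3.length + 1 := by rw [ht2']; simp
          have hlen' : t.length + 1 = n := by simpa using hlen
          have hsum : c.length + r.length = n := by
            rw [hc, hr]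
            simp only [Walk.length_cons, Walk.length_append]
            omega
          have hcpos : 0 < c.length := by rw [hc]; simp
          have hrpos : 0 < r.length := by rw [hr]; simp
          have hn2 : n % 2 = 1 := Nat.odd_iff.mp hodd
          rcases Nat.even_or_odd c.length with hpar | hpar
          · have hodd_r : Odd r.length := by
              rw [Nat.odd_iff]
              have := Nat.even_iff.mp hpar
              omega
            obtain ⟨x', c', hcyc, hodd', hle⟩ := ih r.length (by omega) r rfl hodd_r
            exact ⟨x', c', hcyc, hodd', le_trans hle (by omega)⟩
          · obtain ⟨x', c', hcyc, hodd', hle⟩ := ih c.length (by omega) c rfl hpar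
            exact ⟨x', c', hcyc, hodd', le_trans hle (by omega)⟩


private lemma stmt19Split {V : Type*} {G : SimpleGraph V} :
    ∀ (m : ℕ) {u v : V} (w : G.Walk u v), m ≤ w.length →
      ∃ (x : V) (p : G.Walk u x) (q : G.Walk x v),
        p.length = m ∧ p.length + q.length = w.length := by
  intro m
  induction m with
  | zero => intro u v w _; exact ⟨u, Walk.nil, w, rfl, by simp⟩
  | succ m ih =>
    intro u v w h
    cases w with
    | nil => simp at h
    | cons hadj t =>
      obtain ⟨x, p, q, hp, hpq⟩ := ih t (by simpa using h)
      refine ⟨x, Walk.cons hadj p, q, by simp [hp], ?_⟩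
      simp only [Walk.length_cons]
      omega


/-- A connected regular graph with `d+1` distinct adjacency
eigenvalues and finite odd-girth at least `2d+1` has diameter exactly `d` and
odd-girth exactly `2d+1`. -/
theorem stmt_19 {V : Type*} [Fintype V] [DecidableEq V] (G : SimpleGraph V)
    [DecidableRel G.Adj] (k d : ℕ)
    (hconn : G.Connected) (hreg : G.IsRegularOfDegree k)
    (heig : (spectrum ℝ (G.adjMatrix ℝ)).ncard = d + 1)
    (hoddcycle : ∃ (u : V) (w : G.Walk u u), w.IsCycle ∧ Odd w.length)
    (hog : ∀ (u : V) (w : G.Walk u u), w.IsCycle → Odd w.length → 2 * d + 1 ≤ w.length) :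
    G.diam = d ∧
      sInf {n : ℕ | Odd n ∧ ∃ (u : V) (w : G.Walk u u), w.IsCycle ∧ w.length = n}
        = 2 * d + 1 := by
  have hD : G.diam ≤ d := stmt19DiamLe G d hconn heig
  have hne : Nonempty V := hconn.nonempty
  have hediam : G.ediam ≠ ⊤ := by
    obtain ⟨u, v, huv⟩ := G.exists_edist_eq_ediam_of_finite
    rw [← huv]
    exact (SimpleGraph.edist_ne_top_iff_reachable).mpr (hconn u v)
  set S := {n : ℕ | Odd n ∧ ∃ (u : V) (w : G.Walk u u), w.IsCycle ∧ w.length = n} with hS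
  have hSne : S.Nonempty := by
    obtain ⟨u, w, hc, ho⟩ := hoddcycle
    exact ⟨w.length, ho, u, w, hc, rfl⟩
  have hg_mem : sInf S ∈ S := Nat.sInf_mem hSne
  set g := sInf S with hg
  obtain ⟨hgodd, u, w, hcyc, hwlen⟩ := hg_mem
  have hglb : 2 * d + 1 ≤ g := hwlen ▸ hog u w hcyc (by rw [hwlen]; exact hgodd)
  have hkey : g ≤ 2 * G.diam + 1 := by
    by_contra hgt
    push_neg at hgt
    set D := G.diam with hDdef
    have hm_le : D + 1 ≤ w.length := by omega
    obtain ⟨x, p, q, hp, hpq⟩ := stmt19Split (D + 1) w hm_le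
    obtain ⟨sp, hsp⟩ := hconn.exists_walk_length_eq_dist u x
    have hsp_le : sp.length ≤ D := by
      rw [hsp]; exact SimpleGraph.dist_le_diam hediam
    set a := p.append sp.reverse with hadef
    set b := sp.append q with hbdef
    have ha : a.length = (D + 1) + sp.length := by
      rw [hadef, Walk.length_append, Walk.length_reverse, hp]
    have hb : b.length = sp.length + (g - (D + 1)) := by
      rw [hbdef, Walk.length_append]
      congr 1
      omega
    have hg2 : g % 2 = 1 := Nat.odd_iff.mp hgodd
    rcases Nat.even_or_odd a.length with hpar | hpar
    · have hbodd : Odd b.length := by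
        rw [Nat.odd_iff]
        have := Nat.even_iff.mp hpar
        omega
      obtain ⟨x', c, hcyc', hodd', hle⟩ := stmt19OddWalkCycle b.length b rfl hbodd
      have hmem : c.length ∈ S := ⟨hodd', x', c, hcyc', rfl⟩
      have := Nat.sInf_le hmem
      omega
    · obtain ⟨x', c, hcyc', hodd', hle⟩ := stmt19OddWalkCycle a.length a rfl hpar
      have hmem : c.length ∈ S := ⟨hodd', x', c, hcyc', rfl⟩
      have := Nat.sInf_le hmem
      omega
  constructor
  · omega
  · omega
end
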